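/- arXiv:0710.0491 — 5 statements merged into one kernel-verified Lean document; each statement's English description precedes it below -/
import Mathlib

section
/- Let d ≥ 1, let f : [0,1]^d → ℝ be bounded, and let u : [0,1]^d → ℝ be continuous on [0,1]^d, twice continuously differentiable on the open cube (0,1)^d, satisfy Δu(x) = Σ_{i=1}^d ∂_i²u(x) = f(x) for all x ∈ (0,1)^d, and vanish on the boundary ∂[0,1]^d. Then sup_{x∈[0,1]^d} |u(x)| ≤ (1/8)·sup_{x∈(0,1)^d} |f(x)|. -/
/-- Partial derivative of `u` in direction `i` (one-sided within `[0,1]` at the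
boundary): `∂ᵢu(x) = d/dt u(x₁,…,t,…,x_d)|_{t = xᵢ}` taken within `[0,1]`. -/
noncomputable def pd (d : ℕ) (i : Fin d) (u : (Fin d → ℝ) → ℝ) : (Fin d → ℝ) → ℝ :=
  fun x => derivWithin (fun t => u (Function.update x i t)) (Set.Icc 0 1) (x i)

/-- Mixed partial derivative `D^α u = ∂₁^{α₁} ⋯ ∂_d^{α_d} u`. -/
noncomputable def mderiv (d : ℕ) (α : Fin d → ℕ) (u : (Fin d → ℝ) → ℝ) :
    (Fin d → ℝ) → ℝ :=
  (List.finRange d).foldr (fun i v => (pd d i)^[α i] v) u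

/-- The closed unit cube `[0,1]^d`. -/
def unitCube (d : ℕ) : Set (Fin d → ℝ) := Set.Icc 0 1

/-- The open unit cube `(0,1)^d`. -/
def openCube (d : ℕ) : Set (Fin d → ℝ) := Set.pi Set.univ fun _ => Set.Ioo (0 : ℝ) 1

/-- The boundary `∂[0,1]^d`. -/
def cubeBdry (d : ℕ) : Set (Fin d → ℝ) := {x ∈ unitCube d | ∃ i, x i = 0 ∨ x i = 1}

/-- All mixed partial derivatives `D^β f`, `β ≤ α`, exist on `s` (each step of the
iterated differentiation is differentiable within `[0,1]` in its direction). -/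
def HasDerivsOn (d : ℕ) (α : Fin d → ℕ) (f : (Fin d → ℝ) → ℝ)
    (s : Set (Fin d → ℝ)) : Prop :=
  ∀ β : Fin d → ℕ, (∀ i, β i ≤ α i) → ∀ i : Fin d, β i < α i → ∀ x ∈ s,
    DifferentiableWithinAt ℝ (fun t => mderiv d β f (Function.update x i t))
      (Set.Icc 0 1) (x i)

/-- `u ∈ X_k^d`: all mixed derivatives `D^α u`, `α ∈ {0,…,k}^d`, exist, are
continuous on `[0,1]^d` and vanish on the boundary. -/
def MemX (d k : ℕ) (u : (Fin d → ℝ) → ℝ) : Prop :=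
  HasDerivsOn d (fun _ => k) u (unitCube d) ∧
  ∀ α : Fin d → ℕ, (∀ i, α i ≤ k) →
    ContinuousOn (mderiv d α u) (unitCube d) ∧
    ∀ x ∈ cubeBdry d, mderiv d α u x = 0

/-- `u ∈ X_k^d(K)`: additionally all these derivatives are bounded by `K`. -/
def MemXb (d k : ℕ) (K : ℝ) (u : (Fin d → ℝ) → ℝ) : Prop :=
  MemX d k u ∧
  ∀ α : Fin d → ℕ, (∀ i, α i ≤ k) → ∀ x ∈ unitCube d, |mderiv d α u x| ≤ K

/-- Mesh size `h_k = 2^{-lvl_k}` attached to a level vector. -/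
noncomputable def hmesh (d : ℕ) (lvl : Fin d → ℕ) (k : Fin d) : ℝ := ((2 : ℝ) ^ lvl k)⁻¹

/-- The grid point with index `i` on the grid of level `lvl`. -/
noncomputable def gridpt (d : ℕ) (lvl : Fin d → ℕ) (i : Fin d → ℕ) : Fin d → ℝ :=
  fun k => (i k : ℝ) * hmesh d lvl k

/-- Valid grid indices: `0 ≤ i_k ≤ 2^{lvl_k}`. -/
def IsGridIdx (d : ℕ) (lvl : Fin d → ℕ) (i : Fin d → ℕ) : Prop := ∀ k, i k ≤ 2 ^ lvl k

/-- The hyperplane set `I^{(J)} = {x ∈ [0,1]^d : x_j/h_j ∈ ℤ for j ∈ J}`. -/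
def Iplane (d : ℕ) (J : Finset (Fin d)) (lvl : Fin d → ℕ) : Set (Fin d → ℝ) :=
  {x ∈ unitCube d | ∀ j ∈ J, ∃ m : ℤ, x j = (m : ℝ) * hmesh d lvl j}

/-- `U` is the central finite difference solution of the Poisson problem `Δu = f`
with zero Dirichlet data on the grid of level `lvl`. -/
def IsFDPoisson (d : ℕ) (lvl : Fin d → ℕ) (f : (Fin d → ℝ) → ℝ)
    (U : (Fin d → ℕ) → ℝ) : Prop :=
  (∀ i : Fin d → ℕ, IsGridIdx d lvl i → (∃ k, i k = 0 ∨ i k = 2 ^ lvl k) → U i = 0) ∧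
  (∀ i : Fin d → ℕ, (∀ k, 1 ≤ i k ∧ i k < 2 ^ lvl k) →
    ∑ k, (U (Function.update i k (i k + 1)) - 2 * U i + U (Function.update i k (i k - 1)))
        / hmesh d lvl k ^ 2
      = f (gridpt d lvl i))

/-- `U` is the upwind (implicit Euler) solution of the advection equation
`Σᵢ ∂ᵢu = 0` on the grid of level `lvl`, with inflow data given by `u`. -/
def IsUpwindSol (d : ℕ) (lvl : Fin d → ℕ) (u : (Fin d → ℝ) → ℝ)
    (U : (Fin d → ℕ) → ℝ) : Prop :=
  (∀ i : Fin d → ℕ, IsGridIdx d lvl i → (∃ k, i k = 0) → U i = u (gridpt d lvl i)) ∧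
  (∀ i : Fin d → ℕ, IsGridIdx d lvl i → (∀ k, 1 ≤ i k) →
    ∑ k, (U i - U (Function.update i k (i k - 1))) / hmesh d lvl k = 0)

/-- `g` is the multilinear interpolant of the grid function `U` on the grid of
level `lvl`: it agrees with `U` at all grid points and is a polynomial of degree
at most `1` in each variable on each grid cell. -/
def IsInterp (d : ℕ) (lvl : Fin d → ℕ) (U : (Fin d → ℕ) → ℝ)
    (g : (Fin d → ℝ) → ℝ) : Prop :=
  (∀ i : Fin d → ℕ, IsGridIdx d lvl i → g (gridpt d lvl i) = U i) ∧
  (∀ j : Fin d → ℕ, (∀ k, j k < 2 ^ lvl k) →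
    ∃ c : Finset (Fin d) → ℝ, ∀ x : Fin d → ℝ,
      (∀ k, (j k : ℝ) * hmesh d lvl k ≤ x k ∧ x k ≤ ((j k : ℝ) + 1) * hmesh d lvl k) →
      g x = ∑ T : Finset (Fin d), c T * ∏ k ∈ T, x k)

/-- The domain `{x : x ± h e_k ∈ [0,1]^d}` of the truncation error terms. -/
def diffDom (d : ℕ) (k : Fin d) (h : ℝ) : Set (Fin d → ℝ) :=
  {x | Function.update x k (x k + h) ∈ unitCube d ∧
       Function.update x k (x k - h) ∈ unitCube d}



section AuxPoisson
open Set Filter Topology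

lemma second_nonneg {φ : ℝ → ℝ} {a : ℝ} (ha : a ∈ Set.Ioo (0:ℝ) 1)
    (hφ : ContDiffOn ℝ 2 φ (Set.Ioo 0 1))
    (hmin : ∀ t ∈ Set.Icc (0:ℝ) 1, φ a ≤ φ t) :
    0 ≤ deriv (deriv φ) a := by
  by_contra hL
  push_neg at hL
  set L := deriv (deriv φ) a with hLdef
  have hIoo_nhds : Set.Ioo (0:ℝ) 1 ∈ 𝓝 a := isOpen_Ioo.mem_nhds ha
  have hd1 : ContDiffOn ℝ 1 (deriv φ) (Set.Ioo 0 1) :=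
    hφ.deriv_of_isOpen isOpen_Ioo (by norm_num)
  have hdiff1 : DifferentiableAt ℝ (deriv φ) a :=
    ((hd1.differentiableOn (by norm_num)).differentiableAt hIoo_nhds)
  have hderiv : HasDerivAt (deriv φ) L a := hdiff1.hasDerivAt
  have hlocmin : IsLocalMin φ a := by
    filter_upwards [hIoo_nhds] with t ht using hmin t ⟨ht.1.le, ht.2.le⟩
  have hφ'a : deriv φ a = 0 := hlocmin.deriv_eq_zero
  -- slope of deriv φ tends to L < 0
  have hslope : Tendsto (slope (deriv φ) a) (𝓝[≠] a) (𝓝 L) :=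
    hasDerivAt_iff_tendsto_slope.1 hderiv
  have hev : ∀ᶠ t in 𝓝[>] a, slope (deriv φ) a t < 0 := by
    have : ∀ᶠ t in 𝓝[≠] a, slope (deriv φ) a t < 0 :=
      hslope.eventually (Filter.Tendsto.eventually_lt_const hL tendsto_id) |>.mono (fun t ht => ht)
    exact this.filter_mono (nhdsWithin_mono a (fun t ht => ne_of_gt ht))
  have hev2 : ∀ᶠ t in 𝓝[>] a, t ∈ Set.Ioo (0:ℝ) 1 :=
    eventually_nhdsWithin_of_eventually_nhds hIoo_nhds
  obtain ⟨b, hb, hsub⟩ := mem_nhdsGT_iff_exists_Ioo_subset.1 (hev.and hev2)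
  set b' := (a + b) / 2 with hb'
  have hab' : a < b' := by simp only [hb']; linarith [mem_Ioi.1 hb]
  have hb'b : b' < b := by simp only [hb']; linarith [mem_Ioi.1 hb]
  have hIcc_sub : Set.Icc a b' ⊆ Set.Ioo (0:ℝ) 1 := by
    intro t ht
    rcases eq_or_lt_of_le ht.1 with h | h
    · exact h ▸ ha
    · exact (hsub ⟨h, lt_of_le_of_lt ht.2 hb'b⟩).2
  have hanti : StrictAntiOn φ (Set.Icc a b') := by
    apply strictAntiOn_of_deriv_neg (convex_Icc a b')
    · exact (hφ.continuousOn).mono hIcc_sub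
    · intro t ht
      rw [interior_Icc] at ht
      have h1 := hsub ⟨ht.1, lt_trans ht.2 hb'b⟩
      have := h1.1
      rw [slope_def_field, hφ'a] at this
      have htgt : (0:ℝ) < t - a := by linarith [ht.1]
      -- slope < 0 means (deriv φ t - 0)/(t - a) < 0
      by_contra hcon
      push_neg at hcon
      have hnn : (0:ℝ) ≤ (deriv φ t - 0) / (t - a) :=
        div_nonneg (by linarith) htgt.le
      linarith
  have hb'mem : b' ∈ Set.Icc (0:ℝ) 1 :=
    ⟨(hIcc_sub ⟨le_refl a, hab'.le⟩).1.le.trans (by linarith [hab'.le]), (hIcc_sub ⟨hab'.le, le_rfl⟩).2.le⟩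
  have := hanti (Set.left_mem_Icc.2 hab'.le) (Set.right_mem_Icc.2 hab'.le) hab'
  exact absurd (hmin b' hb'mem) (by linarith)


lemma pd_pd_eq {d : ℕ} (u : (Fin d → ℝ) → ℝ) (i : Fin d) (z : Fin d → ℝ)
    (hz : z i ∈ Set.Ioo (0:ℝ) 1) :
    pd d i (pd d i u) z =
      deriv (deriv (fun t => u (Function.update z i t))) (z i) := by
  have hIcc : Set.Icc (0:ℝ) 1 ∈ 𝓝 (z i) := Icc_mem_nhds hz.1 hz.2
  have hfun : (fun t => pd d i u (Function.update z i t))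
      = fun t => derivWithin (fun s => u (Function.update z i s)) (Set.Icc 0 1) t := by
    funext t
    simp only [pd, Function.update_idem, Function.update_self]
  rw [show pd d i (pd d i u) z
      = derivWithin (fun t => pd d i u (Function.update z i t)) (Set.Icc 0 1) (z i) from rfl,
    hfun, derivWithin_of_mem_nhds hIcc]
  apply Filter.EventuallyEq.deriv_eq
  filter_upwards [isOpen_Ioo.mem_nhds hz] with t ht
  exact derivWithin_of_mem_nhds (Icc_mem_nhds ht.1 ht.2)

lemma pd_pd_neg {d : ℕ} (u : (Fin d → ℝ) → ℝ) (i : Fin d) (x : Fin d → ℝ)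
    (hx : x i ∈ Set.Icc (0:ℝ) 1) :
    pd d i (pd d i (fun y => -u y)) x = - pd d i (pd d i u) x := by
  have hud : ∀ t ∈ Set.Icc (0:ℝ) 1, UniqueDiffWithinAt ℝ (Set.Icc (0:ℝ) 1) t :=
    fun t ht => (uniqueDiffOn_Icc zero_lt_one) t ht
  have hinner : ∀ t ∈ Set.Icc (0:ℝ) 1,
      pd d i (fun y => -u y) (Function.update x i t) = -(pd d i u (Function.update x i t)) := by
    intro t ht
    simp only [pd, Function.update_idem, Function.update_self]
    exact derivWithin.neg
  show derivWithin (fun t => pd d i (fun y => -u y) (Function.update x i t)) (Set.Icc 0 1) (x i)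
      = - derivWithin (fun t => pd d i u (Function.update x i t)) (Set.Icc 0 1) (x i)
  rw [derivWithin_congr hinner (hinner (x i) hx)]
  exact derivWithin.neg


lemma mem_unitCube_iff {d : ℕ} {y : Fin d → ℝ} :
    y ∈ unitCube d ↔ ∀ j, y j ∈ Set.Icc (0:ℝ) 1 := by
  simp [unitCube, Set.mem_Icc, Pi.le_def, forall_and]

lemma lowerA (d : ℕ) (hd : 1 ≤ d) (f u : (Fin d → ℝ) → ℝ) (M : ℝ)
    (hf : ∀ x ∈ openCube d, |f x| ≤ M)
    (hcont : ContinuousOn u (unitCube d))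
    (hsmooth : ContDiffOn ℝ 2 u (openCube d))
    (heq : ∀ x ∈ openCube d, ∑ i, pd d i (pd d i u) x = f x)
    (hbd : ∀ x ∈ unitCube d, (∃ i, x i = 0 ∨ x i = 1) → u x = 0) :
    ∀ x ∈ unitCube d, -((1 / 8) * M) ≤ u x := by
  have hM : 0 ≤ M := by
    have hmem : (fun _ => (1:ℝ)/2) ∈ openCube d := by
      intro j _; constructor <;> norm_num
    exact le_trans (abs_nonneg _) (hf _ hmem)
  intro x hx
  -- reduce to an ε-version
  by_contra hcon
  push_neg at hcon
  set ε : ℝ := ((-((1/8)*M)) - u x) / 2 with hεdef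
  have hε : 0 < ε := by simp only [hεdef]; linarith
  clear_value ε
  set i0 : Fin d := ⟨0, hd⟩ with hi0
  set c : ℝ := M/2 + ε with hc
  have hc0 : 0 < c := by rw [hc]; positivity
  clear_value c
  set w : (Fin d → ℝ) → ℝ := fun y => u y + c * (y i0 * (1 - y i0)) with hw
  clear_value w
  have hwcont : ContinuousOn w (unitCube d) := by
    rw [hw]
    exact hcont.add (Continuous.continuousOn (by fun_prop))
  have hne : (unitCube d).Nonempty := ⟨0, by
    rw [mem_unitCube_iff]; intro j; constructor <;> norm_num⟩
  obtain ⟨z, hzmem, hzmin⟩ := (isCompact_Icc (a := (0 : Fin d → ℝ)) (b := 1)).exists_isMinOn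
    hne hwcont
  have hzmin' : ∀ y ∈ unitCube d, w z ≤ w y := fun y hy => isMinOn_iff.1 hzmin y hy
  by_cases hzo : z ∈ openCube d
  · -- interior minimum: contradiction with the PDE
    exfalso
    have key : ∀ i : Fin d, (if i = i0 then 2*c else 0) ≤ pd d i (pd d i u) z := by
      intro i
      have hzi : z i ∈ Set.Ioo (0:ℝ) 1 := hzo i (Set.mem_univ i)
      rw [pd_pd_eq u i z hzi]
      set g : ℝ → ℝ := fun t => u (Function.update z i t) with hg
      have hmaps : Set.MapsTo (Function.update z i) (Set.Ioo (0:ℝ) 1) (openCube d) := by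
        intro t ht j _
        by_cases hji : j = i
        · subst hji; simpa using ht
        · rw [Function.update_of_ne hji]; exact hzo j (Set.mem_univ j)
      have hgsm : ContDiffOn ℝ 2 g (Set.Ioo 0 1) :=
        hsmooth.comp ((contDiff_update 2 z i).contDiffOn) hmaps
      have hφmin : ∀ t ∈ Set.Icc (0:ℝ) 1, w z ≤ w (Function.update z i t) := by
        intro t ht
        apply hzmin'
        rw [mem_unitCube_iff]
        intro j
        by_cases hji : j = i
        · subst hji; simpa using ht
        · rw [Function.update_of_ne hji]; exact mem_unitCube_iff.1 hzmem j
      by_cases hii : i = i0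
      · -- the distinguished direction
        set φ : ℝ → ℝ := fun t => g t + c * (t * (1 - t)) with hφ
        have hφeq : ∀ t, w (Function.update z i t) = φ t := by
          intro t
          simp only [hφ, hw, hg, ← hii, Function.update_self]
        have hq : ∀ t : ℝ, HasDerivAt (fun s => c * (s * (1 - s))) (c * (1 - 2*t)) t := by
          intro t
          have h := (((hasDerivAt_id t).mul
            ((hasDerivAt_const t (1:ℝ)).sub (hasDerivAt_id t)))).const_mul c
          exact h.congr_deriv (by simp only [id_eq, Pi.sub_apply]; ring)
        have hφsm : ContDiffOn ℝ 2 φ (Set.Ioo 0 1) := by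
          apply hgsm.add
          exact (ContDiff.contDiffOn (by fun_prop))
        have hmin2 : ∀ t ∈ Set.Icc (0:ℝ) 1, φ (z i) ≤ φ t := by
          intro t ht
          rw [← hφeq t, ← hφeq (z i), Function.update_eq_self]
          exact hφmin t ht
        have h2 := second_nonneg hzi hφsm hmin2
        -- compute deriv (deriv φ) (z i) = deriv (deriv g) (z i) - 2*c
        have hgd : DifferentiableOn ℝ g (Set.Ioo 0 1) := hgsm.differentiableOn (by norm_num)
        have hdg1 : ContDiffOn ℝ 1 (deriv g) (Set.Ioo 0 1) :=
          hgsm.deriv_of_isOpen isOpen_Ioo (by norm_num)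
        have hφ' : deriv φ =ᶠ[𝓝 (z i)] fun t => deriv g t + c * (1 - 2*t) := by
          filter_upwards [isOpen_Ioo.mem_nhds hzi] with t ht
          have hgt : DifferentiableAt ℝ g t :=
            (hgd t ht).differentiableAt (isOpen_Ioo.mem_nhds ht)
          exact (hgt.hasDerivAt.add (hq t)).deriv
        have hdd : deriv (deriv φ) (z i) = deriv (deriv g) (z i) - 2*c := by
          rw [hφ'.deriv_eq]
          have hdgz : DifferentiableAt ℝ (deriv g) (z i) :=
            (hdg1.differentiableOn (by norm_num)).differentiableAt (isOpen_Ioo.mem_nhds hzi)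
          have hlin : HasDerivAt (fun t : ℝ => c * (1 - 2*t)) (-(2*c)) (z i) := by
            have h := ((hasDerivAt_const (z i) (1:ℝ)).sub
              ((hasDerivAt_id (z i)).const_mul 2)).const_mul c
            exact h.congr_deriv (by ring)
          have := (hdgz.hasDerivAt.add hlin).deriv
          rw [show (fun t => deriv g t + c * (1 - 2 * t)) = (deriv g + fun t => c * (1 - 2 * t)) from rfl, this]; ring
        rw [if_pos hii]
        have : deriv (deriv φ) (z i) = deriv (deriv g) (z i) - 2*c := hdd
        linarith
      · -- other directions: plain second-derivative nonnegativity
        rw [if_neg hii]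
        have hφeq : ∀ t, w (Function.update z i t) = g t + c * (z i0 * (1 - z i0)) := by
          intro t
          simp only [hw, hg, Function.update_of_ne (fun h => hii h.symm)]
        have hmin2 : ∀ t ∈ Set.Icc (0:ℝ) 1, g (z i) ≤ g t := by
          intro t ht
          have h1 := hφmin t ht
          rw [hφeq t] at h1
          have h2 : w z = g (z i) + c * (z i0 * (1 - z i0)) := by
            rw [← hφeq (z i), Function.update_eq_self]
          linarith
        have h2 := second_nonneg hzi hgsm hmin2
        exact h2
    have hsum := heq z hzo
    have h1 : 2*c ≤ ∑ i, pd d i (pd d i u) z := by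
      have h0 : ∑ i : Fin d, (if i = i0 then 2*c else 0) = 2*c := by
        simp
      calc 2*c = ∑ i : Fin d, (if i = i0 then 2*c else 0) := h0.symm
        _ ≤ _ := Finset.sum_le_sum (fun i _ => key i)
    have h2 : f z ≤ M := le_trans (le_abs_self _) (hf z hzo)
    rw [hsum] at h1
    simp only [hc] at h1
    linarith
  · -- minimum on the boundary
    have hbdz : ∃ i, z i = 0 ∨ z i = 1 := by
      by_contra h
      push_neg at h
      apply hzo
      intro j _
      have hj := mem_unitCube_iff.1 hzmem j
      exact ⟨lt_of_le_of_ne hj.1 (Ne.symm (h j).1), lt_of_le_of_ne hj.2 (h j).2⟩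
    have huz : u z = 0 := hbd z hzmem hbdz
    have hz0 := mem_unitCube_iff.1 hzmem i0
    have hx0 := mem_unitCube_iff.1 hx i0
    have hwz : 0 ≤ w z := by
      simp only [hw, huz, zero_add]
      have : 0 ≤ z i0 * (1 - z i0) := mul_nonneg hz0.1 (by linarith [hz0.2])
      positivity
    have hxq : x i0 * (1 - x i0) ≤ 1/4 := by nlinarith [hx0.1, hx0.2, sq_nonneg (x i0 - 1/2)]
    have hwx := hzmin' x hx
    simp only [hw, huz, zero_add] at hwx
    have hle : c * (x i0 * (1 - x i0)) ≤ c * (1/4) :=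
      mul_le_mul_of_nonneg_left hxq hc0.le
    have hzq : 0 ≤ c * (z i0 * (1 - z i0)) :=
      mul_nonneg hc0.le (mul_nonneg hz0.1 (by linarith [hz0.2]))
    have h1 : 0 ≤ u x + c * (1/4) := by linarith
    have hc' : c = M/2 + ε := hc
    have hε' : ε = (-(1 / 8 * M) - u x) / 2 := hεdef
    linarith


end AuxPoisson

/-- Maximum principle bound for the Poisson problem (Lemma `stability`, part 1):
if `Δu = f` on `(0,1)^d` with zero boundary data, then `sup|u| ≤ (1/8)·sup|f|`. -/
theorem poisson_sup_bound (d : ℕ) (hd : 1 ≤ d) (f u : (Fin d → ℝ) → ℝ) (M : ℝ)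
    (hf : ∀ x ∈ openCube d, |f x| ≤ M)
    (hcont : ContinuousOn u (unitCube d))
    (hsmooth : ContDiffOn ℝ 2 u (openCube d))
    (heq : ∀ x ∈ openCube d, ∑ i, pd d i (pd d i u) x = f x)
    (hbd : ∀ x ∈ unitCube d, (∃ i, x i = 0 ∨ x i = 1) → u x = 0) :
    ∀ x ∈ unitCube d, |u x| ≤ (1 / 8) * M := by
  intro x hx
  rw [abs_le]
  constructor
  · exact lowerA d hd f u M hf hcont hsmooth heq hbd x hx
  · have h := lowerA d hd (fun y => -f y) (fun y => -u y) M
      (fun y hy => by simpa using hf y hy)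
      hcont.neg hsmooth.neg
      (fun y hy => by
        have hstep : ∀ i : Fin d, pd d i (pd d i (fun y => -u y)) y = - pd d i (pd d i u) y :=
          fun i => pd_pd_neg u i y (Set.Ioo_subset_Icc_self (hy i (Set.mem_univ i)))
        rw [Finset.sum_congr rfl (fun i _ => hstep i), Finset.sum_neg_distrib, heq y hy])
      (fun y hy hex => by simp [hbd y hy hex])
      x hx
    linarith
end

section
/- Let d ≥ 1, K > 0, and let u ∈ X_4^d(K). Then for each k ∈ {1,…,d} there exists a family of functions τ_k(·;h), for h ∈ (0,1], each defined and continuous on the set {x ∈ [0,1]^d : x ± h e_k ∈ [0,1]^d}, such that: (i) for every such x and h, ∂_k²u(x) − (u(x+h e_k) − 2u(x) + u(x−h e_k))/h² = h²·τ_k(x;h); and (ii) for every multi-index α ∈ {0,4}^d with α_k = 0 and every h, the derivative D^α τ_k(·;h) (taken in the coordinate directions other than k) exists and satisfies ‖D^α τ_k(·;h)‖_∞ ≤ K/12. Consequently, for any mesh sizes h_1,…,h_d, Σ_{k=1}^d ∂_k²u(x) − Σ_{k=1}^d (u(x+h_k e_k) − 2u(x) + u(x−h_k e_k))/h_k² =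 Σ_{k=1}^d h_k² τ_k(x;h_k) wherever all the difference quotients are defined. -/
namespace TEE

variable {d : ℕ}

/-- apply a list of partial derivative operators -/
noncomputable def pdList (d : ℕ) (L : List (Fin d)) (f : (Fin d → ℝ) → ℝ) :
    (Fin d → ℝ) → ℝ :=
  L.foldr (fun i v => pd d i v) f

noncomputable def mlist (d : ℕ) (α : Fin d → ℕ) : List (Fin d) :=
  (List.finRange d).flatMap fun i => List.replicate (α i) i

lemma pdList_nil (f : (Fin d → ℝ) → ℝ) : pdList d [] f = f := rfl

lemma pdList_cons (i : Fin d) (L : List (Fin d)) (f : (Fin d → ℝ) → ℝ) :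
    pdList d (i :: L) f = pd d i (pdList d L f) := rfl

lemma pdList_append (L₁ L₂ : List (Fin d)) (f : (Fin d → ℝ) → ℝ) :
    pdList d (L₁ ++ L₂) f = pdList d L₁ (pdList d L₂ f) := by
  simp [pdList, List.foldr_append]

lemma pdList_replicate (n : ℕ) (i : Fin d) (f : (Fin d → ℝ) → ℝ) :
    pdList d (List.replicate n i) f = (pd d i)^[n] f := by
  induction n with
  | zero => rfl
  | succ n ih =>
      rw [List.replicate_succ, pdList_cons, ih, Function.iterate_succ_apply']

lemma mderiv_eq_pdList (α : Fin d → ℕ) (f : (Fin d → ℝ) → ℝ) :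
    mderiv d α f = pdList d (mlist d α) f := by
  show (List.finRange d).foldr (fun i v => (pd d i)^[α i] v) f = _
  unfold mlist
  induction List.finRange d with
  | nil => rfl
  | cons j l ih =>
      rw [List.foldr_cons, ih, List.flatMap_cons, pdList_append, pdList_replicate]

lemma count_flatMap_replicate (α : Fin d → ℕ) (i : Fin d) :
    ∀ l : List (Fin d), l.Nodup → i ∈ l →
      (l.flatMap fun j => List.replicate (α j) j).count i = α i := by
  intro l
  induction l with
  | nil => intro _ h; simp at h
  | cons j l ih =>
      intro h1 h2
      rw [List.flatMap_cons, List.count_append, List.count_replicate]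
      rcases List.nodup_cons.1 h1 with ⟨hj, hl⟩
      rcases List.mem_cons.1 h2 with rfl | hil
      · have : (l.flatMap fun j => List.replicate (α j) j).count i = 0 := by
          rw [List.count_eq_zero]
          intro hmem
          rcases List.mem_flatMap.1 hmem with ⟨j', hj', hrep⟩
          rcases List.eq_of_mem_replicate hrep with rfl
          exact hj hj'
        simp [this]
      · have hji : j ≠ i := by rintro rfl; exact hj hil
        rw [ih hl hil]
        simp [if_neg hji]

lemma count_mlist (α : Fin d → ℕ) (i : Fin d) : (mlist d α).count i = α i :=
  count_flatMap_replicate α i _ (List.nodup_finRange d) (List.mem_finRange i)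

lemma mem_mlist {α : Fin d → ℕ} {j : Fin d} (hj : j ∈ mlist d α) : α j ≠ 0 := by
  rcases List.mem_flatMap.1 hj with ⟨j', _, hrep⟩
  rcases List.eq_of_mem_replicate hrep with rfl
  intro h0
  rw [h0] at hrep
  simp at hrep

lemma pairwise_le_replicate (n : ℕ) (i : Fin d) :
    (List.replicate n i).Pairwise (· ≤ ·) := by
  induction n with
  | zero => simp
  | succ n ih =>
      rw [List.replicate_succ, List.pairwise_cons]
      exact ⟨fun b hb => (List.eq_of_mem_replicate hb).ge, ih⟩

lemma sorted_flatMap_replicate (α : Fin d → ℕ) :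
    ∀ l : List (Fin d), l.Pairwise (· < ·) →
      (l.flatMap fun j => List.replicate (α j) j).Pairwise (· ≤ ·) := by
  intro l
  induction l with
  | nil => simp
  | cons j l ih =>
      intro h1
      rw [List.flatMap_cons, List.pairwise_append]
      rcases List.pairwise_cons.1 h1 with ⟨hj, hl⟩
      refine ⟨pairwise_le_replicate _ _, ih hl, ?_⟩
      intro a ha b hb
      rcases List.eq_of_mem_replicate ha with rfl
      rcases List.mem_flatMap.1 hb with ⟨j', hj', hrep⟩
      rcases List.eq_of_mem_replicate hrep with rfl
      exact (hj _ hj').le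

lemma sorted_mlist (α : Fin d → ℕ) : (mlist d α).Pairwise (· ≤ ·) :=
  sorted_flatMap_replicate α _ (List.pairwise_lt_finRange d)

/-- a sorted list equals the canonical list of its counts -/
lemma sorted_eq_mlist {L : List (Fin d)} (hL : L.Pairwise (· ≤ ·)) :
    L = mlist d (fun i => L.count i) := by
  apply List.Perm.eq_of_pairwise' hL (sorted_mlist _)
  rw [List.perm_iff_count]
  intro i
  rw [count_mlist]

/-- If all indices below `i` are absent, incrementing `α` at `i` corresponds to
applying `pd i` outermost. -/
lemma mderiv_update_succ {α : Fin d → ℕ} {i : Fin d}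
    (h : ∀ j, j < i → α j = 0) (f : (Fin d → ℝ) → ℝ) :
    mderiv d (Function.update α i (α i + 1)) f = pd d i (mderiv d α f) := by
  have hmem : ∀ j ∈ mlist d α, i ≤ j := by
    intro j hj
    by_contra hc
    exact mem_mlist hj (h j (lt_of_not_ge hc))
  have hsorted : (i :: mlist d α).Pairwise (· ≤ ·) := by
    rw [List.pairwise_cons]
    exact ⟨hmem, sorted_mlist α⟩
  have hcount : (fun j => (i :: mlist d α).count j) = Function.update α i (α i + 1) := by
    funext j
    rw [List.count_cons, count_mlist]
    by_cases hij : j = i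
    · subst hij; simp [Function.update_self]
    · simp [Function.update_of_ne hij, hij, Ne.symm hij]
  have := sorted_eq_mlist hsorted
  rw [hcount] at this
  rw [mderiv_eq_pdList, ← this, pdList_cons, ← mderiv_eq_pdList]

lemma mderiv_zero (f : (Fin d → ℝ) → ℝ) : mderiv d (fun _ => 0) f = f := by
  rw [mderiv_eq_pdList]
  have : mlist d (fun _ => 0) = [] := by
    unfold mlist
    simp
  rw [this, pdList_nil]

/-! ### Basic facts about the cube and updates -/


lemma mem_unitCube {x : Fin d → ℝ} :
    x ∈ unitCube d ↔ ∀ i, x i ∈ Set.Icc (0:ℝ) 1 := by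
  constructor
  · rintro ⟨h0, h1⟩ i; exact ⟨h0 i, h1 i⟩
  · intro h; exact ⟨fun i => (h i).1, fun i => (h i).2⟩

lemma coord_mem_Icc {x : Fin d → ℝ} (hx : x ∈ unitCube d) (i : Fin d) :
    x i ∈ Set.Icc (0:ℝ) 1 := mem_unitCube.1 hx i

lemma update_mem_unitCube {x : Fin d → ℝ} (hx : x ∈ unitCube d) {i : Fin d} {t : ℝ}
    (ht : t ∈ Set.Icc (0:ℝ) 1) : Function.update x i t ∈ unitCube d := by
  rw [mem_unitCube]
  intro j
  by_cases hj : j = i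
  · subst hj; simp [ht]
  · rw [Function.update_of_ne hj]; exact coord_mem_Icc hx j

lemma uniqueDiffOn_unitIcc : UniqueDiffOn ℝ (Set.Icc (0:ℝ) 1) :=
  uniqueDiffOn_Icc one_pos

lemma uniqueDiffWithinAt_unitIcc {t : ℝ} (ht : t ∈ Set.Icc (0:ℝ) 1) :
    UniqueDiffWithinAt ℝ (Set.Icc (0:ℝ) 1) t :=
  uniqueDiffOn_unitIcc t ht

lemma continuous_update_self (x : Fin d → ℝ) (i : Fin d) :
    Continuous fun t : ℝ => Function.update x i t := by
  apply continuous_pi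
  intro j
  by_cases hj : j = i
  · subst hj; simpa using continuous_id'
  · simp only [Function.update]
    by_cases hji : j = i
    · exact absurd hji hj
    · simpa [hji] using continuous_const

/-- clamp to [0,1] -/
noncomputable def cl (t : ℝ) : ℝ := max 0 (min 1 t)

lemma continuous_cl : Continuous cl :=
  continuous_const.max (continuous_const.min continuous_id)

lemma cl_mem_Icc (t : ℝ) : cl t ∈ Set.Icc (0:ℝ) 1 := by
  constructor
  · exact le_max_left _ _
  · apply max_le one_pos.le (min_le_left _ _)

lemma cl_eq_self {t : ℝ} (ht : t ∈ Set.Icc (0:ℝ) 1) : cl t = t := by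
  rcases ht with ⟨h0, h1⟩
  unfold cl
  rw [min_eq_right h1, max_eq_right h0]

noncomputable def clCube (d : ℕ) (x : Fin d → ℝ) : Fin d → ℝ := fun i => cl (x i)

lemma continuous_clCube : Continuous (clCube d) := by
  apply continuous_pi
  intro i
  exact continuous_cl.comp (continuous_apply i)

lemma clCube_mem (x : Fin d → ℝ) : clCube d x ∈ unitCube d :=
  mem_unitCube.2 fun i => cl_mem_Icc (x i)

lemma clCube_eq_self {x : Fin d → ℝ} (hx : x ∈ unitCube d) : clCube d x = x := by
  funext i
  exact cl_eq_self (coord_mem_Icc hx i)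

/-- sets closed under updating coordinate `i` within `[0,1]` -/
def UpdClosed (s : Set (Fin d → ℝ)) (i : Fin d) : Prop :=
  ∀ x ∈ s, ∀ t ∈ Set.Icc (0:ℝ) 1, Function.update x i t ∈ s

lemma updClosed_unitCube (i : Fin d) : UpdClosed (unitCube d) i :=
  fun _ hx _ ht => update_mem_unitCube hx ht

lemma pd_congr_on {f g : (Fin d → ℝ) → ℝ} {s : Set (Fin d → ℝ)} {i : Fin d}
    (hs : UpdClosed s i) (hfg : ∀ y ∈ s, f y = g y) {x : Fin d → ℝ} (hx : x ∈ s) :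
    pd d i f x = pd d i g x := by
  unfold pd
  apply derivWithin_congr
  · intro t ht
    exact hfg _ (hs x hx t ht)
  · have : Function.update x i (x i) = x := Function.update_eq_self i x
    rw [this]
    exact hfg _ hx

/-! ### diffDom facts -/

lemma diffDom_subset_cube {k : Fin d} {h : ℝ} (hh : 0 < h) :
    diffDom d k h ⊆ unitCube d := by
  rintro x ⟨h1, h2⟩
  rw [mem_unitCube]
  intro i
  by_cases hik : i = k
  · subst hik
    have a1 := coord_mem_Icc h1 i
    have a2 := coord_mem_Icc h2 i
    rw [Function.update_self] at a1 a2
    constructor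
    · linarith [a2.1]
    · linarith [a1.2]
  · have := coord_mem_Icc h1 i
    rwa [Function.update_of_ne hik] at this

lemma diffDom_coord {k : Fin d} {h : ℝ} {x : Fin d → ℝ} (hx : x ∈ diffDom d k h) :
    0 ≤ x k - h ∧ x k + h ≤ 1 := by
  rcases hx with ⟨h1, h2⟩
  have a1 := coord_mem_Icc h1 k
  have a2 := coord_mem_Icc h2 k
  rw [Function.update_self] at a1 a2
  exact ⟨a2.1, a1.2⟩

lemma updClosed_diffDom {k i : Fin d} (hik : i ≠ k) {h : ℝ} :
    UpdClosed (diffDom d k h) i := by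
  rintro x ⟨h1, h2⟩ t ht
  constructor
  · rw [Function.update_of_ne (Ne.symm hik), Function.update_comm hik]
    exact update_mem_unitCube h1 ht
  · rw [Function.update_of_ne (Ne.symm hik), Function.update_comm hik]
    exact update_mem_unitCube h2 ht

/-- the shift maps -/
def shf (d : ℕ) (k : Fin d) (c : ℝ) (x : Fin d → ℝ) : Fin d → ℝ :=
  Function.update x k (x k + c)

lemma continuous_shf (k : Fin d) (c : ℝ) : Continuous (shf d k c) := by
  apply continuous_pi
  intro j
  by_cases hj : j = k
  · subst hj
    simp only [shf, Function.update_self]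
    exact (continuous_apply j).add continuous_const
  · simp only [shf]
    have : (fun x : Fin d → ℝ => Function.update x k (x k + c) j)
        = fun x : Fin d → ℝ => x j := by
      funext x; rw [Function.update_of_ne hj]
    rw [this]
    exact continuous_apply j

lemma shf_mem_cube_plus {k : Fin d} {h : ℝ} {x : Fin d → ℝ}
    (hx : x ∈ diffDom d k h) : shf d k h x ∈ unitCube d := hx.1

lemma shf_mem_cube_minus {k : Fin d} {h : ℝ} {x : Fin d → ℝ}
    (hx : x ∈ diffDom d k h) : shf d k (-h) x ∈ unitCube d := by
  have := hx.2
  simpa [shf, sub_eq_add_neg] using this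

lemma shf_update_comm {k i : Fin d} (hik : i ≠ k) (c : ℝ) (x : Fin d → ℝ) (t : ℝ) :
    shf d k c (Function.update x i t) = Function.update (shf d k c x) i t := by
  unfold shf
  rw [Function.update_of_ne (Ne.symm hik), Function.update_comm (Ne.symm hik)]

/-! ### Integration helpers -/

open MeasureTheory intervalIntegral in
lemma fubini_box {F : ℝ → ℝ → ℝ} (hF : Continuous (Function.uncurry F)) {s t : ℝ}
    (hs : 0 ≤ s) (ht : 0 ≤ t) :
    ∫ σ in (0:ℝ)..s, (∫ τ in (0:ℝ)..t, F σ τ) = ∫ τ in (0:ℝ)..t, ∫ σ in (0:ℝ)..s, F σ τ := by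
  rw [intervalIntegral.integral_of_le hs, intervalIntegral.integral_of_le ht]
  simp_rw [intervalIntegral.integral_of_le ht, intervalIntegral.integral_of_le hs]
  apply MeasureTheory.integral_integral_swap
  rw [MeasureTheory.Measure.prod_restrict]
  apply MeasureTheory.IntegrableOn.mono_set
    (t := Set.Icc (0:ℝ) s ×ˢ Set.Icc (0:ℝ) t)
  · exact hF.continuousOn.integrableOn_compact (isCompact_Icc.prod isCompact_Icc)
  · exact Set.prod_mono Set.Ioc_subset_Icc_self Set.Ioc_subset_Icc_self

lemma primitive_hasDerivAt {F : ℝ → ℝ} (hF : Continuous F) (b : ℝ) :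
    HasDerivAt (fun s => ∫ σ in (0:ℝ)..s, F σ) (F b) b :=
  intervalIntegral.integral_hasDerivAt_right (hF.intervalIntegrable _ _)
    (hF.stronglyMeasurableAtFilter _ _) hF.continuousAt

lemma ftc2_Icc {g g' : ℝ → ℝ} (hg : ContinuousOn g (Set.Icc 0 1)) (hg' : Continuous g')
    (hd : ∀ t ∈ Set.Icc (0:ℝ) 1, HasDerivWithinAt g (g' t) (Set.Icc 0 1) t) {b : ℝ}
    (hb : b ∈ Set.Icc (0:ℝ) 1) : g b = g 0 + ∫ t in (0:ℝ)..b, g' t := by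
  have key := intervalIntegral.integral_eq_sub_of_hasDeriv_right_of_le hb.1
    (hg.mono (Set.Icc_subset_Icc_right hb.2))
    (fun x hx => (((hd x ⟨hx.1.le, hx.2.le.trans hb.2⟩).hasDerivAt
      (Icc_mem_nhds hx.1 (lt_of_lt_of_le hx.2 hb.2))).hasDerivWithinAt
        (s := Set.Ioi x)))
    (hg'.intervalIntegrable 0 b)
  rw [key]; ring

/-! ### Schwarz symmetry of second derivatives (within the cube) -/

theorem schwarz {i j : Fin d} (hij : i ≠ j) {f f₁ f₁₂ : (Fin d → ℝ) → ℝ}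
    (hf : ContinuousOn f (unitCube d))
    (hd₁ : ∀ x ∈ unitCube d,
      HasDerivWithinAt (fun t => f (Function.update x i t)) (f₁ x) (Set.Icc 0 1) (x i))
    (hc₁ : ContinuousOn f₁ (unitCube d))
    (hd₁₂ : ∀ x ∈ unitCube d,
      HasDerivWithinAt (fun t => f₁ (Function.update x j t)) (f₁₂ x) (Set.Icc 0 1) (x j))
    (hc₁₂ : ContinuousOn f₁₂ (unitCube d))
    (hdj : ∀ x ∈ unitCube d,
      DifferentiableWithinAt ℝ (fun t => f (Function.update x j t)) (Set.Icc 0 1) (x j)) :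
    ∀ x ∈ unitCube d,
      HasDerivWithinAt (fun s => pd d j f (Function.update x i s)) (f₁₂ x)
        (Set.Icc 0 1) (x i) := by
  classical
  set F1 : (Fin d → ℝ) → ℝ := f₁ ∘ clCube d with hF1
  set F12 : (Fin d → ℝ) → ℝ := f₁₂ ∘ clCube d with hF12
  have hF1c : Continuous F1 := hc₁.comp_continuous continuous_clCube clCube_mem
  have hF12c : Continuous F12 := hc₁₂.comp_continuous continuous_clCube clCube_mem
  have hF1eq : ∀ y ∈ unitCube d, F1 y = f₁ y := by
    intro y hy; simp only [hF1, Function.comp_apply, clCube_eq_self hy]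
  have hF12eq : ∀ y ∈ unitCube d, F12 y = f₁₂ y := by
    intro y hy; simp only [hF12, Function.comp_apply, clCube_eq_self hy]
  -- Step A : fundamental theorem of calculus in direction `i`
  have stepA : ∀ y ∈ unitCube d,
      f y = f (Function.update y i 0) + ∫ σ in (0:ℝ)..(y i), F1 (Function.update y i σ) := by
    intro y hy
    have := ftc2_Icc (g := fun σ => f (Function.update y i σ))
      (g' := fun σ => F1 (Function.update y i σ))
      (hf.comp (continuous_update_self y i).continuousOn
        (fun σ hσ => update_mem_unitCube hy hσ))
      (hF1c.comp (continuous_update_self y i))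
      (fun σ hσ => by
        show HasDerivWithinAt (fun t => f (Function.update y i t))
          (F1 (Function.update y i σ)) (Set.Icc 0 1) σ
        have hyσ : Function.update y i σ ∈ unitCube d := update_mem_unitCube hy hσ
        have hder := hd₁ _ hyσ
        rw [Function.update_self] at hder
        have heq : (fun t => f (Function.update (Function.update y i σ) i t))
            = fun t => f (Function.update y i t) := by
          funext t; rw [Function.update_idem]
        rw [heq] at hder
        rw [hF1eq _ hyσ]
        exact hder)
      (coord_mem_Icc hy i)
    rwa [Function.update_eq_self i y] at this
  -- Step B : fundamental theorem of calculus in direction `j` for `f₁`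
  have stepB : ∀ y ∈ unitCube d,
      f₁ y = f₁ (Function.update y j 0) + ∫ τ in (0:ℝ)..(y j), F12 (Function.update y j τ) := by
    intro y hy
    have := ftc2_Icc (g := fun τ => f₁ (Function.update y j τ))
      (g' := fun τ => F12 (Function.update y j τ))
      (hc₁.comp (continuous_update_self y j).continuousOn
        (fun τ hτ => update_mem_unitCube hy hτ))
      (hF12c.comp (continuous_update_self y j))
      (fun τ hτ => by
        show HasDerivWithinAt (fun t => f₁ (Function.update y j t))
          (F12 (Function.update y j τ)) (Set.Icc 0 1) τ
        have hyτ : Function.update y j τ ∈ unitCube d := update_mem_unitCube hy hτ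
        have hder := hd₁₂ _ hyτ
        rw [Function.update_self] at hder
        have heq : (fun t => f₁ (Function.update (Function.update y j τ) j t))
            = fun t => f₁ (Function.update y j t) := by
          funext t; rw [Function.update_idem]
        rw [heq] at hder
        rw [hF12eq _ hyτ]
        exact hder)
      (coord_mem_Icc hy j)
    rwa [Function.update_eq_self j y] at this
  -- main part
  intro x hx
  set z : ℝ → ℝ → (Fin d → ℝ) :=
    fun s t => Function.update (Function.update x i s) j t with hz
  have hzmem : ∀ {s t : ℝ}, s ∈ Set.Icc (0:ℝ) 1 → t ∈ Set.Icc (0:ℝ) 1 →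
      z s t ∈ unitCube d := fun hs ht =>
    update_mem_unitCube (update_mem_unitCube hx hs) ht
  have hz_i : ∀ s t, z s t i = s := by
    intro s t
    show Function.update (Function.update x i s) j t i = s
    rw [Function.update_of_ne hij, Function.update_self]
  have hz_j : ∀ s t, z s t j = t := by
    intro s t
    exact Function.update_self _ _ _
  have hz_upd_i : ∀ s t σ, Function.update (z s t) i σ = z σ t := by
    intro s t σ
    show Function.update (Function.update (Function.update x i s) j t) i σ
      = Function.update (Function.update x i σ) j t
    rw [Function.update_comm (Ne.symm hij), Function.update_idem]
  have hz_upd_j : ∀ s t τ, Function.update (z s t) j τ = z s τ := by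
    intro s t τ
    show Function.update (Function.update (Function.update x i s) j t) j τ
      = Function.update (Function.update x i s) j τ
    rw [Function.update_idem]
  have hz_xj : ∀ s, z s (x j) = Function.update x i s := by
    intro s
    show Function.update (Function.update x i s) j (x j) = _
    have : Function.update x i s j = x j := Function.update_of_ne (Ne.symm hij) _ _
    rw [← this, Function.update_eq_self]
  have hzc : Continuous (fun p : ℝ × ℝ => z p.1 p.2) := by
    show Continuous fun p : ℝ × ℝ =>
      Function.update (Function.update x i p.1) j p.2
    have h1 : Continuous fun p : ℝ × ℝ => Function.update x i p.1 :=
      continuous_const.update i continuous_fst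
    exact h1.update j continuous_snd
  -- the parametric integral
  set Φ : ℝ → ℝ → ℝ := fun s τ => ∫ σ in (0:ℝ)..s, F12 (z σ τ) with hΦ
  have hΦc : ∀ s, Continuous (Φ s) := by
    intro s
    apply intervalIntegral.continuous_parametric_intervalIntegral_of_continuous'
      (f := fun τ σ => F12 (z σ τ))
    exact hF12c.comp (hzc.comp continuous_swap)
  -- inner parametric continuity in σ
  have hinner : ∀ t : ℝ, Continuous (fun σ => ∫ τ in (0:ℝ)..t, F12 (z σ τ)) := by
    intro t
    apply intervalIntegral.continuous_parametric_intervalIntegral_of_continuous'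
      (f := fun σ τ => F12 (z σ τ))
    exact hF12c.comp hzc
  -- claim 1
  have claim1 : ∀ s ∈ Set.Icc (0:ℝ) 1, ∀ t ∈ Set.Icc (0:ℝ) 1,
      f (z s t) = f (z 0 t) + ((∫ σ in (0:ℝ)..s, F1 (z σ 0)) + ∫ τ in (0:ℝ)..t, Φ s τ) := by
    intro s hs t ht
    have hA := stepA (z s t) (hzmem hs ht)
    rw [hz_i] at hA
    have hupd0 : Function.update (z s t) i 0 = z 0 t := hz_upd_i s t 0
    have hintg : (fun σ => F1 (Function.update (z s t) i σ)) = fun σ => F1 (z σ t) := by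
      funext σ; rw [hz_upd_i]
    rw [hupd0] at hA
    rw [hintg] at hA
    -- rewrite the integrand using Step B
    have hcongr : ∫ σ in (0:ℝ)..s, F1 (z σ t)
        = ∫ σ in (0:ℝ)..s, (F1 (z σ 0) + ∫ τ in (0:ℝ)..t, F12 (z σ τ)) := by
      apply intervalIntegral.integral_congr
      intro σ hσ
      show F1 (z σ t) = F1 (z σ 0) + ∫ τ in (0:ℝ)..t, F12 (z σ τ)
      rw [Set.uIcc_of_le hs.1] at hσ
      have hσ' : σ ∈ Set.Icc (0:ℝ) 1 := ⟨hσ.1, hσ.2.trans hs.2⟩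
      have hmem := hzmem hσ' ht
      have hB := stepB (z σ t) hmem
      rw [hz_j] at hB
      have h1 : Function.update (z σ t) j 0 = z σ 0 := hz_upd_j σ t 0
      have h2 : (fun τ => F12 (Function.update (z σ t) j τ)) = fun τ => F12 (z σ τ) := by
        funext τ; rw [hz_upd_j]
      rw [h1, h2] at hB
      rw [hF1eq _ hmem, hB, ← hF1eq _ (hzmem hσ' (Set.left_mem_Icc.2 one_pos.le))]
    rw [hcongr] at hA
    have hadd : ∫ σ in (0:ℝ)..s, (F1 (z σ 0) + ∫ τ in (0:ℝ)..t, F12 (z σ τ))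
        = (∫ σ in (0:ℝ)..s, F1 (z σ 0)) + ∫ σ in (0:ℝ)..s, ∫ τ in (0:ℝ)..t, F12 (z σ τ) := by
      apply intervalIntegral.integral_add
      · exact ((hF1c.comp (hzc.comp (continuous_id.prodMk continuous_const)))).intervalIntegrable _ _
      · exact (hinner t).intervalIntegrable _ _
    rw [hadd] at hA
    have hfub : ∫ σ in (0:ℝ)..s, ∫ τ in (0:ℝ)..t, F12 (z σ τ)
        = ∫ τ in (0:ℝ)..t, Φ s τ := by
      apply fubini_box (F := fun σ τ => F12 (z σ τ)) _ hs.1 ht.1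
      exact hF12c.comp hzc
    rw [hfub] at hA
    exact hA
  -- claim 2 : differentiate in `t` at `t = x j`
  have hxj : x j ∈ Set.Icc (0:ℝ) 1 := coord_mem_Icc hx j
  have hxi : x i ∈ Set.Icc (0:ℝ) 1 := coord_mem_Icc hx i
  have claim2 : ∀ s ∈ Set.Icc (0:ℝ) 1,
      pd d j f (z s (x j)) - pd d j f (z 0 (x j)) = Φ s (x j) := by
    intro s hs
    have h01 : (0:ℝ) ∈ Set.Icc (0:ℝ) 1 := Set.left_mem_Icc.2 one_pos.le
    -- derivative of G
    have hG1 : HasDerivWithinAt (fun t => f (z s t)) (pd d j f (z s (x j)))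
        (Set.Icc 0 1) (x j) := by
      have hmem := hzmem hs hxj
      have heq : (fun t => f (Function.update (z s (x j)) j t)) = fun t => f (z s t) := by
        funext t; rw [hz_upd_j]
      have hval : pd d j f (z s (x j))
          = derivWithin (fun t => f (z s t)) (Set.Icc 0 1) (x j) := by
        unfold pd; rw [heq, hz_j]
      rw [hval]
      have hder := (hdj _ hmem).hasDerivWithinAt
      rw [heq, hz_j] at hder
      exact hder
    have hG2 : HasDerivWithinAt (fun t => f (z 0 t)) (pd d j f (z 0 (x j)))
        (Set.Icc 0 1) (x j) := by
      have hmem := hzmem h01 hxj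
      have heq : (fun t => f (Function.update (z 0 (x j)) j t)) = fun t => f (z 0 t) := by
        funext t; rw [hz_upd_j]
      have hval : pd d j f (z 0 (x j))
          = derivWithin (fun t => f (z 0 t)) (Set.Icc 0 1) (x j) := by
        unfold pd; rw [heq, hz_j]
      rw [hval]
      have hder := (hdj _ hmem).hasDerivWithinAt
      rw [heq, hz_j] at hder
      exact hder
    have hG : HasDerivWithinAt (fun t => f (z s t) - f (z 0 t))
        (pd d j f (z s (x j)) - pd d j f (z 0 (x j))) (Set.Icc 0 1) (x j) := hG1.sub hG2
    -- derivative of R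
    have hR : HasDerivWithinAt
        (fun t => (∫ σ in (0:ℝ)..s, F1 (z σ 0)) + ∫ τ in (0:ℝ)..t, Φ s τ)
        (Φ s (x j)) (Set.Icc 0 1) (x j) := by
      exact (HasDerivAt.const_add _ (primitive_hasDerivAt (hΦc s) (x j))).hasDerivWithinAt
    -- transfer
    have hGR : ∀ t ∈ Set.Icc (0:ℝ) 1,
        (fun t => f (z s t) - f (z 0 t)) t
          = (fun t => (∫ σ in (0:ℝ)..s, F1 (z σ 0)) + ∫ τ in (0:ℝ)..t, Φ s τ) t := by
      intro t ht
      have := claim1 s hs t ht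
      simp only
      linarith [this]
    have hG' : HasDerivWithinAt (fun t => f (z s t) - f (z 0 t)) (Φ s (x j))
        (Set.Icc 0 1) (x j) := by
      apply hR.congr hGR (hGR _ hxj)
    have e1 := hG.derivWithin (uniqueDiffWithinAt_unitIcc hxj)
    have e2 := hG'.derivWithin (uniqueDiffWithinAt_unitIcc hxj)
    rw [e1] at e2
    exact e2
  -- conclusion
  set ψ : ℝ → ℝ := fun σ => F12 (Function.update x i σ) with hψ
  have hψc : Continuous ψ := hF12c.comp (continuous_update_self x i)
  have M : ∀ s ∈ Set.Icc (0:ℝ) 1,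
      pd d j f (Function.update x i s)
        = pd d j f (Function.update x i 0) + ∫ σ in (0:ℝ)..s, ψ σ := by
    intro s hs
    have := claim2 s hs
    rw [hz_xj] at this
    have h0 : z 0 (x j) = Function.update x i 0 := hz_xj 0
    rw [h0] at this
    have hΦeq : Φ s (x j) = ∫ σ in (0:ℝ)..s, ψ σ := by
      show (∫ σ in (0:ℝ)..s, F12 (z σ (x j))) = _
      apply intervalIntegral.integral_congr
      intro σ _
      show F12 (z σ (x j)) = ψ σ
      rw [hz_xj, hψ]
    rw [hΦeq] at this
    linarith [this]
  have hprim : HasDerivWithinAt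
      (fun s => pd d j f (Function.update x i 0) + ∫ σ in (0:ℝ)..s, ψ σ)
      (ψ (x i)) (Set.Icc 0 1) (x i) :=
    (HasDerivAt.const_add _ (primitive_hasDerivAt hψc (x i))).hasDerivWithinAt
  have hval : ψ (x i) = f₁₂ x := by
    rw [hψ]
    simp only
    rw [Function.update_eq_self, hF12eq _ hx]
  rw [hval] at hprim
  apply hprim.congr
  · intro s hs
    exact M s hs
  · exact M (x i) hxi

/-! ### Derivative exchange: `pd i (mderiv α u) = mderiv (α + e_i) u` on the cube -/

section Fixedu

variable {u : (Fin d → ℝ) → ℝ} {K : ℝ}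

lemma contD (hu : MemXb d 4 K u) {α : Fin d → ℕ} (hα : ∀ i, α i ≤ 4) :
    ContinuousOn (mderiv d α u) (unitCube d) := (hu.1.2 α hα).1

lemma diffD (hu : MemXb d 4 K u) {α : Fin d → ℕ} (hα : ∀ i, α i ≤ 4) {i : Fin d}
    (hi : α i < 4) {x : Fin d → ℝ} (hx : x ∈ unitCube d) :
    DifferentiableWithinAt ℝ (fun t => mderiv d α u (Function.update x i t))
      (Set.Icc 0 1) (x i) := hu.1.1 α hα i hi x hx

lemma boundD (hu : MemXb d 4 K u) {α : Fin d → ℕ} (hα : ∀ i, α i ≤ 4) {x : Fin d → ℝ}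
    (hx : x ∈ unitCube d) : |mderiv d α u x| ≤ K := hu.2 α hα x hx

lemma pd_mderiv_aux (hu : MemXb d 4 K u) (n : ℕ) :
    ∀ (α : Fin d → ℕ), (∀ j, α j ≤ 4) → ∀ (i : Fin d), α i < 4 →
    (∑ j ∈ Finset.univ.filter (fun j : Fin d => j < i), α j) ≤ n →
    ∀ x ∈ unitCube d,
      HasDerivWithinAt (fun t => mderiv d α u (Function.update x i t))
        (mderiv d (Function.update α i (α i + 1)) u x) (Set.Icc 0 1) (x i) := by
  induction n with
  | zero =>
      intro α hα i hi hsum x hx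
      have hz : ∀ j, j < i → α j = 0 := by
        intro j hj
        have hmem : j ∈ Finset.univ.filter (fun j : Fin d => j < i) := by
          simp [hj]
        have := Finset.sum_eq_zero_iff.1 (Nat.le_zero.1 hsum) j hmem
        exact this
      rw [mderiv_update_succ hz]
      have hder := (diffD hu hα hi hx).hasDerivWithinAt
      exact hder
  | succ n ih =>
      intro α hα i hi hsum x hx
      by_cases hle : (∑ j ∈ Finset.univ.filter (fun j : Fin d => j < i), α j) ≤ n
      · exact ih α hα i hi hle x hx
      -- the prefix sum is positive
      have hpos : 0 < ∑ j ∈ Finset.univ.filter (fun j : Fin d => j < i), α j := by omega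
      obtain ⟨j₁, hj₁mem, hj₁⟩ := Finset.exists_ne_zero_of_sum_ne_zero (by omega :
        (∑ j ∈ Finset.univ.filter (fun j : Fin d => j < i), α j) ≠ 0)
      have hj₁lt : j₁ < i := (Finset.mem_filter.1 hj₁mem).2
      -- least index with nonzero exponent
      set S : Finset (Fin d) := Finset.univ.filter (fun j => α j ≠ 0) with hS
      have hSne : S.Nonempty := ⟨j₁, by simp [hS, hj₁]⟩
      set j₀ : Fin d := S.min' hSne with hj₀def
      have hj₀S : j₀ ∈ S := S.min'_mem hSne
      have hj₀ne : α j₀ ≠ 0 := (Finset.mem_filter.1 hj₀S).2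
      have hj₀le : j₀ ≤ j₁ := S.min'_le j₁ (by simp [hS, hj₁])
      have hj₀i : j₀ < i := lt_of_le_of_lt hj₀le hj₁lt
      have hmin : ∀ j', j' < j₀ → α j' = 0 := by
        intro j' hj'
        by_contra hne
        exact absurd (S.min'_le j' (by simp [hS, hne])) (not_le.2 hj')
      have hij₀ : i ≠ j₀ := (ne_of_gt hj₀i)
      -- β = α - e_{j₀}
      set β : Fin d → ℕ := Function.update α j₀ (α j₀ - 1) with hβ
      have hβle : ∀ j, β j ≤ 4 := by
        intro j
        by_cases hj : j = j₀
        · subst hj; have h4 := hα j₀; simp [hβ, Function.update_self]; omega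
        · simp [hβ, Function.update_of_ne hj]; exact hα j
      have hβi : β i = α i := by rw [hβ, Function.update_of_ne hij₀]
      have hβzero : ∀ j', j' < j₀ → β j' = 0 := by
        intro j' hj'
        have : j' ≠ j₀ := ne_of_lt hj'
        rw [hβ, Function.update_of_ne this]
        exact hmin j' hj'
      have hβα : Function.update β j₀ (β j₀ + 1) = α := by
        funext j
        by_cases hj : j = j₀
        · subst hj; simp [hβ, Function.update_self]; omega
        · simp [hβ, Function.update_of_ne hj]
      -- P1' : mderiv α u = pd j₀ (mderiv β u)
      have P1 : mderiv d α u = pd d j₀ (mderiv d β u) := by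
        rw [← hβα, mderiv_update_succ hβzero]
      -- γ = β + e_i
      set γ : Fin d → ℕ := Function.update β i (β i + 1) with hγ
      have hγle : ∀ j, γ j ≤ 4 := by
        intro j
        by_cases hj : j = i
        · subst hj; simp [hγ, Function.update_self, hβi]; omega
        · simp [hγ, Function.update_of_ne hj]; exact hβle j
      have hγj₀ : γ j₀ = α j₀ - 1 := by
        rw [hγ, Function.update_of_ne (Ne.symm hij₀), hβ, Function.update_self]
      have hγzero : ∀ j', j' < j₀ → γ j' = 0 := by
        intro j' hj'
        have h1 : j' ≠ i := ne_of_lt (lt_trans hj' hj₀i)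
        rw [hγ, Function.update_of_ne h1]
        exact hβzero j' hj'
      have hγα : Function.update γ j₀ (γ j₀ + 1) = Function.update α i (α i + 1) := by
        funext j
        by_cases hj : j = j₀
        · subst hj
          rw [Function.update_self, Function.update_of_ne (Ne.symm hij₀), hγj₀]
          omega
        · rw [Function.update_of_ne hj]
          by_cases hji : j = i
          · subst hji
            rw [hγ, Function.update_self, Function.update_self, hβi]
          · rw [hγ, Function.update_of_ne hji, Function.update_of_ne hji, hβ,
              Function.update_of_ne hj]
      -- P2' : mderiv (α + e_i) u = pd j₀ (mderiv γ u)
      have P2 : mderiv d (Function.update α i (α i + 1)) u = pd d j₀ (mderiv d γ u) := by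
        rw [← hγα, mderiv_update_succ hγzero]
      -- the prefix sum of β is at most n
      have hsumβ : (∑ j ∈ Finset.univ.filter (fun j : Fin d => j < i), β j) ≤ n := by
        have hmem : j₀ ∈ Finset.univ.filter (fun j : Fin d => j < i) := by simp [hj₀i]
        have e1 := Finset.add_sum_erase _ α hmem
        have e2 := Finset.add_sum_erase _ β hmem
        have e3 : ∑ j ∈ (Finset.univ.filter (fun j : Fin d => j < i)).erase j₀, β j
            = ∑ j ∈ (Finset.univ.filter (fun j : Fin d => j < i)).erase j₀, α j := by
          apply Finset.sum_congr rfl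
          intro j hj
          have : j ≠ j₀ := (Finset.mem_erase.1 hj).1
          rw [hβ, Function.update_of_ne this]
        have e4 : β j₀ = α j₀ - 1 := by rw [hβ, Function.update_self]
        omega
      -- IH : the i-derivative of mderiv β
      have hIH : ∀ y ∈ unitCube d,
          HasDerivWithinAt (fun t => mderiv d β u (Function.update y i t))
            (mderiv d γ u y) (Set.Icc 0 1) (y i) := by
        intro y hy
        have := ih β hβle i (by omega) hsumβ y hy
        rwa [← hγ] at this
      -- Schwarz
      have hγj₀4 : γ j₀ < 4 := by
        rw [hγj₀]; have := hα j₀; omega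
      have hsch := schwarz hij₀
        (f := mderiv d β u) (f₁ := mderiv d γ u)
        (f₁₂ := mderiv d (Function.update α i (α i + 1)) u)
        (contD hu hβle) hIH (contD hu hγle)
        (fun y hy => by
          have hder := (diffD hu hγle hγj₀4 hy).hasDerivWithinAt
          have hval : derivWithin (fun t => mderiv d γ u (Function.update y j₀ t))
              (Set.Icc 0 1) (y j₀) = mderiv d (Function.update α i (α i + 1)) u y := by
            rw [P2]; rfl
          rwa [hval] at hder)
        (contD hu (by intro j; by_cases hj : j = i
                      · subst hj; rw [Function.update_self]; omega
                      · rw [Function.update_of_ne hj]; exact hα j))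
        (fun y hy => diffD hu hβle (by rw [hβ, Function.update_self]; omega : β j₀ < 4) hy)
        x hx
      have hfun : (fun s => pd d j₀ (mderiv d β u) (Function.update x i s))
          = fun s => mderiv d α u (Function.update x i s) := by
        funext s; rw [← P1]
      rwa [hfun] at hsch

lemma hasDeriv_mderiv (hu : MemXb d 4 K u) {α : Fin d → ℕ} (hα : ∀ j, α j ≤ 4)
    {i : Fin d} (hi : α i < 4) {x : Fin d → ℝ} (hx : x ∈ unitCube d) :
    HasDerivWithinAt (fun t => mderiv d α u (Function.update x i t))
      (mderiv d (Function.update α i (α i + 1)) u x) (Set.Icc 0 1) (x i) :=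
  pd_mderiv_aux hu _ α hα i hi le_rfl x hx

lemma pd_mderiv (hu : MemXb d 4 K u) {α : Fin d → ℕ} (hα : ∀ j, α j ≤ 4)
    {i : Fin d} (hi : α i < 4) {x : Fin d → ℝ} (hx : x ∈ unitCube d) :
    pd d i (mderiv d α u) x = mderiv d (Function.update α i (α i + 1)) u x :=
  (hasDeriv_mderiv hu hα hi hx).derivWithin
    (uniqueDiffWithinAt_unitIcc (coord_mem_Icc hx i))

end Fixedu

/-! ### The truncation error function and its derivatives -/

section Tau

variable {u : (Fin d → ℝ) → ℝ} {K : ℝ}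

/-- the multi-index `2 e_k` -/
def e2 (d : ℕ) (k : Fin d) : Fin d → ℕ := fun i => if i = k then 2 else 0

lemma mderiv_e2 (k : Fin d) (f : (Fin d → ℝ) → ℝ) :
    mderiv d (e2 d k) f = pd d k (pd d k f) := by
  have e1eq : (fun i : Fin d => if i = k then 1 else 0)
      = Function.update (fun _ : Fin d => (0:ℕ)) k (0 + 1) := by
    funext j; simp [Function.update_apply]
  have h1 : mderiv d (fun i : Fin d => if i = k then 1 else 0) f = pd d k f := by
    rw [e1eq, mderiv_update_succ (fun j _ => rfl), mderiv_zero]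
  have e2eq : e2 d k = Function.update (fun i : Fin d => if i = k then 1 else 0) k (1 + 1) := by
    funext j
    by_cases hj : j = k
    · subst hj; simp [e2, Function.update_self]
    · simp [e2, Function.update_of_ne hj, hj]
  have h2' := mderiv_update_succ (α := fun i : Fin d => if i = k then 1 else 0) (i := k)
    (fun j hj => by simp [Fin.ne_of_lt hj]) f
  simp only [eq_self_iff_true, if_true] at h2'
  rw [e2eq, h2', h1]

/-- the truncation error function -/
noncomputable def tau (d : ℕ) (u : (Fin d → ℝ) → ℝ) (k : Fin d) (h : ℝ) :
    (Fin d → ℝ) → ℝ := fun x =>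
  (1 / h ^ 2) * mderiv d (e2 d k) u x
    - (1 / h ^ 4) * (u (shf d k h x) - 2 * u x + u (shf d k (-h) x))

/-- the closed formula for derivatives of `tau` -/
noncomputable def rhsF (d : ℕ) (u : (Fin d → ℝ) → ℝ) (k : Fin d) (h : ℝ)
    (β : Fin d → ℕ) : (Fin d → ℝ) → ℝ := fun y =>
  (1 / h ^ 2) * mderiv d (fun j => β j + if j = k then 2 else 0) u y
    - (1 / h ^ 4) * (mderiv d β u (shf d k h y) - 2 * mderiv d β u y
        + mderiv d β u (shf d k (-h) y))

lemma shf_coord {k i : Fin d} (hik : i ≠ k) (c : ℝ) (x : Fin d → ℝ) :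
    shf d k c x i = x i := Function.update_of_ne hik _ _

lemma rhs_hasDeriv (hu : MemXb d 4 K u) {k : Fin d} {h : ℝ} (hh : 0 < h)
    {β : Fin d → ℕ} (hβ : ∀ j, β j ≤ 4) (hβk : β k = 0)
    {i : Fin d} (hik : i ≠ k) (hi4 : β i < 4)
    {x : Fin d → ℝ} (hx : x ∈ diffDom d k h) :
    HasDerivWithinAt (fun t => rhsF d u k h β (Function.update x i t))
      (rhsF d u k h (Function.update β i (β i + 1)) x) (Set.Icc 0 1) (x i) := by
  have hxc : x ∈ unitCube d := diffDom_subset_cube hh hx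
  have hxp : shf d k h x ∈ unitCube d := shf_mem_cube_plus hx
  have hxm : shf d k (-h) x ∈ unitCube d := shf_mem_cube_minus hx
  set β₂ : Fin d → ℕ := fun j => β j + if j = k then 2 else 0 with hβ₂
  have hβ₂le : ∀ j, β₂ j ≤ 4 := by
    intro j
    by_cases hj : j = k
    · subst hj; simp [hβ₂, hβk]
    · simp [hβ₂, hj]; exact hβ j
  have hβ₂i : β₂ i < 4 := by simp [hβ₂, hik]; exact hi4
  -- first term
  have hA := hasDeriv_mderiv hu hβ₂le hβ₂i hxc
  -- shifted terms
  have hBp : HasDerivWithinAt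
      (fun t => mderiv d β u (shf d k h (Function.update x i t)))
      (mderiv d (Function.update β i (β i + 1)) u (shf d k h x)) (Set.Icc 0 1) (x i) := by
    have heq : (fun t => mderiv d β u (shf d k h (Function.update x i t)))
        = fun t => mderiv d β u (Function.update (shf d k h x) i t) := by
      funext t; rw [shf_update_comm hik]
    rw [heq]
    have := hasDeriv_mderiv hu hβ hi4 hxp
    rwa [shf_coord hik] at this
  have hBm : HasDerivWithinAt
      (fun t => mderiv d β u (shf d k (-h) (Function.update x i t)))
      (mderiv d (Function.update β i (β i + 1)) u (shf d k (-h) x)) (Set.Icc 0 1) (x i) := by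
    have heq : (fun t => mderiv d β u (shf d k (-h) (Function.update x i t)))
        = fun t => mderiv d β u (Function.update (shf d k (-h) x) i t) := by
      funext t; rw [shf_update_comm hik]
    rw [heq]
    have := hasDeriv_mderiv hu hβ hi4 hxm
    rwa [shf_coord hik] at this
  have hB0 := hasDeriv_mderiv hu hβ hi4 hxc
  -- combine
  have hcomb := ((hA.const_mul (1 / h ^ 2)).sub
    (((hBp.sub (hB0.const_mul 2)).add hBm).const_mul (1 / h ^ 4)))
  have hidx : Function.update β₂ i (β₂ i + 1)
      = fun j => Function.update β i (β i + 1) j + if j = k then 2 else 0 := by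
    funext j
    by_cases hj : j = i
    · subst hj
      rw [Function.update_self, Function.update_self]
      simp [hβ₂, hik]
    · rw [Function.update_of_ne hj, Function.update_of_ne hj]
  have : rhsF d u k h (Function.update β i (β i + 1)) x
      = (1 / h ^ 2) * mderiv d (Function.update β₂ i (β₂ i + 1)) u x
        - (1 / h ^ 4) * (mderiv d (Function.update β i (β i + 1)) u (shf d k h x)
            - 2 * mderiv d (Function.update β i (β i + 1)) u x
            + mderiv d (Function.update β i (β i + 1)) u (shf d k (-h) x)) := by
    rw [rhsF, hidx]
  rw [this]
  exact hcomb

lemma master (hu : MemXb d 4 K u) {k : Fin d} {h : ℝ} (hh : 0 < h) :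
    ∀ L : List (Fin d), (∀ i ∈ L, i ≠ k) → (∀ i, L.count i ≤ 4) →
    ∀ x ∈ diffDom d k h,
      pdList d L (tau d u k h) x = rhsF d u k h (fun i => L.count i) x := by
  intro L
  induction L with
  | nil =>
      intro _ _ x hx
      show tau d u k h x = rhsF d u k h (fun i => ([] : List (Fin d)).count i) x
      have h1 : (fun j : Fin d => ([] : List (Fin d)).count j + if j = k then 2 else 0)
          = e2 d k := by
        funext j; simp [e2]
      have h2 : (fun j : Fin d => ([] : List (Fin d)).count j) = fun _ => 0 := by
        funext j; simp
      rw [rhsF, h1, h2, mderiv_zero]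
      rfl
  | cons i L' ih =>
      intro hmem hcount x hx
      have hik : i ≠ k := hmem i List.mem_cons_self
      have hxc : x ∈ unitCube d := diffDom_subset_cube hh hx
      have hcount' : ∀ j, L'.count j ≤ 4 := by
        intro j
        have := hcount j
        rw [List.count_cons] at this
        omega
      have hcL'k : L'.count k = 0 := by
        rw [List.count_eq_zero]
        intro hk
        exact hmem k (List.mem_cons_of_mem i hk) rfl
      have hcL'i : L'.count i < 4 := by
        have := hcount i
        rw [List.count_cons] at this
        simp at this
        omega
      -- congruence on diffDom
      have hstep : pdList d (i :: L') (tau d u k h) x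
          = pd d i (rhsF d u k h (fun j => L'.count j)) x := by
        rw [pdList_cons]
        exact pd_congr_on (updClosed_diffDom hik)
          (fun y hy => ih (fun j hj => hmem j (List.mem_cons_of_mem i hj)) hcount' y hy) hx
      rw [hstep]
      have hder := rhs_hasDeriv hu hh hcount' hcL'k hik hcL'i hx
      have hpd : pd d i (rhsF d u k h (fun j => L'.count j)) x
          = rhsF d u k h (Function.update (fun j => L'.count j) i (L'.count i + 1)) x :=
        hder.derivWithin (uniqueDiffWithinAt_unitIcc (coord_mem_Icc hxc i))
      rw [hpd]
      congr 1
      funext j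
      rw [Function.update_apply]
      by_cases hj : j = i
      · subst hj; simp [List.count_cons]
      · simp [List.count_cons, hj, Ne.symm hj]

end Tau

lemma taylor_bound_right {φ φ₁ φ₂ φ₃ φ₄ : ℝ → ℝ} {a b : ℝ} (hab : a < b) {K : ℝ}
    (h0 : ∀ t ∈ Set.Icc a b, HasDerivWithinAt φ (φ₁ t) (Set.Icc a b) t)
    (h1 : ∀ t ∈ Set.Icc a b, HasDerivWithinAt φ₁ (φ₂ t) (Set.Icc a b) t)
    (h2 : ∀ t ∈ Set.Icc a b, HasDerivWithinAt φ₂ (φ₃ t) (Set.Icc a b) t)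
    (h3 : ∀ t ∈ Set.Icc a b, HasDerivWithinAt φ₃ (φ₄ t) (Set.Icc a b) t)
    (h4 : ∀ t ∈ Set.Icc a b, |φ₄ t| ≤ K) :
    |φ b - (φ a + φ₁ a * (b - a) + φ₂ a * (b - a) ^ 2 / 2 + φ₃ a * (b - a) ^ 3 / 6)|
      ≤ K * (b - a) ^ 4 / 24 := by
  have hud : UniqueDiffOn ℝ (Set.Icc a b) := uniqueDiffOn_Icc hab
  set s : Set ℝ := Set.Icc a b with hsdef
  have i1 : ∀ t ∈ s, iteratedDerivWithin 1 φ s t = φ₁ t := by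
    intro t ht
    rw [iteratedDerivWithin_succ, iteratedDerivWithin_zero]
    exact (h0 t ht).derivWithin (hud t ht)
  have i2 : ∀ t ∈ s, iteratedDerivWithin 2 φ s t = φ₂ t := by
    intro t ht
    rw [iteratedDerivWithin_succ]
    rw [derivWithin_congr i1 (i1 t ht)]
    exact (h1 t ht).derivWithin (hud t ht)
  have i3 : ∀ t ∈ s, iteratedDerivWithin 3 φ s t = φ₃ t := by
    intro t ht
    rw [iteratedDerivWithin_succ]
    rw [derivWithin_congr i2 (i2 t ht)]
    exact (h2 t ht).derivWithin (hud t ht)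
  have i4 : ∀ t ∈ s, iteratedDerivWithin 4 φ s t = φ₄ t := by
    intro t ht
    rw [iteratedDerivWithin_succ]
    rw [derivWithin_congr i3 (i3 t ht)]
    exact (h3 t ht).derivWithin (hud t ht)
  -- smoothness
  have c0 : ContDiffOn ℝ 0 φ₃ s := by
    rw [contDiffOn_zero]
    exact fun t ht => ((h3 t ht).differentiableWithinAt).continuousWithinAt
  have c1 : ContDiffOn ℝ 1 φ₂ s := by
    rw [show (1 : WithTop ℕ∞) = 0 + 1 by norm_num, contDiffOn_succ_iff_derivWithin hud]
    refine ⟨fun t ht => (h2 t ht).differentiableWithinAt, by simp, ?_⟩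
    apply c0.congr
    intro t ht
    exact (h2 t ht).derivWithin (hud t ht)
  have c2 : ContDiffOn ℝ 2 φ₁ s := by
    rw [show (2 : WithTop ℕ∞) = 1 + 1 by norm_num, contDiffOn_succ_iff_derivWithin hud]
    refine ⟨fun t ht => (h1 t ht).differentiableWithinAt, by simp, ?_⟩
    apply c1.congr
    intro t ht
    exact (h1 t ht).derivWithin (hud t ht)
  have c3 : ContDiffOn ℝ 3 φ s := by
    rw [show (3 : WithTop ℕ∞) = 2 + 1 by norm_num, contDiffOn_succ_iff_derivWithin hud]
    refine ⟨fun t ht => (h0 t ht).differentiableWithinAt, by simp, ?_⟩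
    apply c2.congr
    intro t ht
    exact (h0 t ht).derivWithin (hud t ht)
  have hf' : DifferentiableOn ℝ (iteratedDerivWithin 3 φ s) (Set.Ioo a b) := by
    intro t ht
    have htI : t ∈ s := Set.Ioo_subset_Icc_self ht
    have dφ₃ : DifferentiableWithinAt ℝ φ₃ (Set.Ioo a b) t :=
      ((h3 t htI).differentiableWithinAt).mono Set.Ioo_subset_Icc_self
    exact dφ₃.congr (fun y hy => i3 y (Set.Ioo_subset_Icc_self hy)) (i3 t htI)
  obtain ⟨ξ, hξ, heq⟩ := taylor_mean_remainder_lagrange (n := 3) hab.ne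
    (by rw [Set.uIcc_of_le hab.le]; exact c3)
    (by rw [Set.uIcc_of_le hab.le, Set.uIoo_of_le hab.le]; exact hf')
  rw [Set.uIcc_of_le hab.le] at heq
  rw [Set.uIoo_of_le hab.le] at hξ
  have ha : a ∈ s := Set.left_mem_Icc.2 hab.le
  have hTP : taylorWithinEval φ 3 s a b
      = φ a + φ₁ a * (b - a) + φ₂ a * (b - a) ^ 2 / 2 + φ₃ a * (b - a) ^ 3 / 6 := by
    rw [taylor_within_apply]
    rw [Finset.sum_range_succ, Finset.sum_range_succ, Finset.sum_range_succ,
      Finset.sum_range_succ, Finset.sum_range_zero]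
    rw [iteratedDerivWithin_zero, i1 a ha, i2 a ha, i3 a ha]
    simp [Nat.factorial]
    ring
  have hξI : ξ ∈ s := Set.Ioo_subset_Icc_self hξ
  rw [hTP] at heq
  rw [heq, i4 ξ hξI]
  have hfact : (((3 + 1) : ℕ).factorial : ℝ) = 24 := by norm_num [Nat.factorial]
  rw [hfact]
  rw [abs_div, abs_mul]
  have h24 : |(24:ℝ)| = 24 := by norm_num
  rw [h24, abs_pow]
  have hba : |b - a| = b - a := abs_of_pos (by linarith)
  rw [hba]
  gcongr
  · exact h4 ξ hξI

lemma taylor_central {φ φ₁ φ₂ φ₃ φ₄ : ℝ → ℝ} {c h K : ℝ} (hh : 0 < h)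
    (h0 : ∀ t ∈ Set.Icc (c - h) (c + h),
      HasDerivWithinAt φ (φ₁ t) (Set.Icc (c - h) (c + h)) t)
    (h1 : ∀ t ∈ Set.Icc (c - h) (c + h),
      HasDerivWithinAt φ₁ (φ₂ t) (Set.Icc (c - h) (c + h)) t)
    (h2 : ∀ t ∈ Set.Icc (c - h) (c + h),
      HasDerivWithinAt φ₂ (φ₃ t) (Set.Icc (c - h) (c + h)) t)
    (h3 : ∀ t ∈ Set.Icc (c - h) (c + h),
      HasDerivWithinAt φ₃ (φ₄ t) (Set.Icc (c - h) (c + h)) t)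
    (h4 : ∀ t ∈ Set.Icc (c - h) (c + h), |φ₄ t| ≤ K) :
    |φ (c + h) - 2 * φ c + φ (c - h) - h ^ 2 * φ₂ c| ≤ K * h ^ 4 / 12 := by
  have hsub : Set.Icc c (c + h) ⊆ Set.Icc (c - h) (c + h) :=
    Set.Icc_subset_Icc (by linarith) le_rfl
  have hcc : c < c + h := by linarith
  -- right side
  have hright := taylor_bound_right (φ := φ) (φ₁ := φ₁) (φ₂ := φ₂) (φ₃ := φ₃) (φ₄ := φ₄)
    hcc
    (fun t ht => (h0 t (hsub ht)).mono hsub)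
    (fun t ht => (h1 t (hsub ht)).mono hsub)
    (fun t ht => (h2 t (hsub ht)).mono hsub)
    (fun t ht => (h3 t (hsub ht)).mono hsub)
    (fun t ht => h4 t (hsub ht))
  -- reflection
  have hmaps : ∀ t ∈ Set.Icc c (c + h), 2 * c - t ∈ Set.Icc (c - h) (c + h) := by
    intro t ht
    rcases ht with ⟨ht1, ht2⟩
    constructor <;> [linarith; linarith]
  have hneg : ∀ t : ℝ, HasDerivWithinAt (fun t : ℝ => 2 * c - t) (-1)
      (Set.Icc c (c + h)) t := by
    intro t
    exact ((hasDerivAt_id' t).const_sub (2*c)).hasDerivWithinAt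
      (s := Set.Icc c (c + h))
  have refl0 : ∀ t ∈ Set.Icc c (c + h),
      HasDerivWithinAt (fun t => φ (2 * c - t)) ((fun t => -φ₁ (2 * c - t)) t)
        (Set.Icc c (c + h)) t := by
    intro t ht
    have := HasDerivWithinAt.comp t (h0 _ (hmaps t ht)) (hneg t)
      (fun y hy => hmaps y hy)
    simpa [mul_comm, Function.comp_def] using this
  have refl1 : ∀ t ∈ Set.Icc c (c + h),
      HasDerivWithinAt (fun t => -φ₁ (2 * c - t)) ((fun t => φ₂ (2 * c - t)) t)
        (Set.Icc c (c + h)) t := by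
    intro t ht
    have := (HasDerivWithinAt.comp t (h1 _ (hmaps t ht)) (hneg t)
      (fun y hy => hmaps y hy)).neg
    simpa [mul_comm, Function.comp_def, Pi.neg_def] using this
  have refl2 : ∀ t ∈ Set.Icc c (c + h),
      HasDerivWithinAt (fun t => φ₂ (2 * c - t)) ((fun t => -φ₃ (2 * c - t)) t)
        (Set.Icc c (c + h)) t := by
    intro t ht
    have := HasDerivWithinAt.comp t (h2 _ (hmaps t ht)) (hneg t)
      (fun y hy => hmaps y hy)
    simpa [mul_comm, Function.comp_def] using this
  have refl3 : ∀ t ∈ Set.Icc c (c + h),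
      HasDerivWithinAt (fun t => -φ₃ (2 * c - t)) ((fun t => φ₄ (2 * c - t)) t)
        (Set.Icc c (c + h)) t := by
    intro t ht
    have := (HasDerivWithinAt.comp t (h3 _ (hmaps t ht)) (hneg t)
      (fun y hy => hmaps y hy)).neg
    simpa [mul_comm, Function.comp_def, Pi.neg_def] using this
  have hleft := taylor_bound_right (φ := fun t => φ (2 * c - t))
    (φ₁ := fun t => -φ₁ (2 * c - t)) (φ₂ := fun t => φ₂ (2 * c - t))
    (φ₃ := fun t => -φ₃ (2 * c - t)) (φ₄ := fun t => φ₄ (2 * c - t))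
    hcc refl0 refl1 refl2 refl3
    (fun t ht => h4 _ (hmaps t ht))
  have e1 : 2 * c - (c + h) = c - h := by ring
  have e2 : 2 * c - c = c := by ring
  rw [e1, e2] at hleft
  have e3 : c + h - c = h := by ring
  rw [e3] at hright hleft
  have habs1 := abs_le.1 hright
  have habs2 := abs_le.1 hleft
  rw [abs_le]
  constructor <;> nlinarith [habs1.1, habs1.2, habs2.1, habs2.2]


section Tau2

variable {u : (Fin d → ℝ) → ℝ} {K : ℝ}

lemma mderiv_tau_eq (hu : MemXb d 4 K u) {k : Fin d} {h : ℝ} (hh : 0 < h)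
    {β : Fin d → ℕ} (hβ : ∀ j, β j ≤ 4) (hβk : β k = 0) :
    ∀ y ∈ diffDom d k h, mderiv d β (tau d u k h) y = rhsF d u k h β y := by
  intro y hy
  rw [mderiv_eq_pdList]
  have hmem : ∀ j ∈ mlist d β, j ≠ k := by
    intro j hj
    have := mem_mlist hj
    intro he; subst he; exact this hβk
  have hcnt : ∀ j, (mlist d β).count j ≤ 4 := by
    intro j; rw [count_mlist]; exact hβ j
  have := master hu hh (mlist d β) hmem hcnt y hy
  rwa [show (fun i => (mlist d β).count i) = β from funext (count_mlist β)] at this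

lemma tau_hasDerivs (hu : MemXb d 4 K u) {k : Fin d} {h : ℝ} (hh : 0 < h)
    {α : Fin d → ℕ} (hα4 : ∀ i, α i = 0 ∨ α i = 4) (hαk : α k = 0) :
    HasDerivsOn d α (tau d u k h) (diffDom d k h) := by
  intro β hβ i hβi x hx
  have hαle : ∀ j, α j ≤ 4 := by intro j; rcases hα4 j with h'|h' <;> omega
  have hαi4 : α i = 4 := by rcases hα4 i with h'|h' <;> omega
  have hik : i ≠ k := by
    intro he; subst he; rw [hαk] at hαi4; omega
  have hβ4 : ∀ j, β j ≤ 4 := fun j => le_trans (hβ j) (hαle j)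
  have hβk : β k = 0 := by have := hβ k; rw [hαk] at this; omega
  have hβi4 : β i < 4 := by have := hβi; omega
  have hder := rhs_hasDeriv hu hh hβ4 hβk hik hβi4 hx
  apply hder.differentiableWithinAt.congr
  · intro t ht
    exact mderiv_tau_eq hu hh hβ4 hβk _ (updClosed_diffDom hik x hx t ht)
  · have hxt : Function.update x i (x i) = x := Function.update_eq_self i x
    have := mderiv_tau_eq hu hh hβ4 hβk x hx
    rw [hxt]
    exact this

lemma tau_bound (hu : MemXb d 4 K u) {k : Fin d} {h : ℝ} (hh : 0 < h)
    {α : Fin d → ℕ} (hα4 : ∀ i, α i = 0 ∨ α i = 4) (hαk : α k = 0)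
    {x : Fin d → ℝ} (hx : x ∈ diffDom d k h) :
    |mderiv d α (tau d u k h) x| ≤ K / 12 := by
  have hαle : ∀ j, α j ≤ 4 := by intro j; rcases hα4 j with h'|h' <;> omega
  rw [mderiv_tau_eq hu hh hαle hαk x hx]
  -- the index families α + n e_k
  set aj : ℕ → Fin d → ℕ := fun n j => α j + if j = k then n else 0 with haj
  have hajle : ∀ n, n ≤ 4 → ∀ j, aj n j ≤ 4 := by
    intro n hn j
    by_cases hj : j = k
    · subst hj; simp [haj, hαk]; omega
    · simp [haj, hj]; exact hαle j
  have hajk : ∀ n, aj n k = n := by intro n; simp [haj, hαk]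
  -- the slice functions
  set c : ℝ := x k with hc
  have hxc : x ∈ unitCube d := diffDom_subset_cube hh hx
  obtain ⟨hc1, hc2⟩ := diffDom_coord hx
  have hsub : Set.Icc (c - h) (c + h) ⊆ Set.Icc (0:ℝ) 1 :=
    Set.Icc_subset_Icc hc1 hc2
  have hchain : ∀ n : ℕ, n ≤ 3 → ∀ t ∈ Set.Icc (c - h) (c + h),
      HasDerivWithinAt (fun t' => mderiv d (aj n) u (Function.update x k t'))
        (mderiv d (aj (n + 1)) u (Function.update x k t))
        (Set.Icc (c - h) (c + h)) t := by
    intro n hn t ht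
    have htI : t ∈ Set.Icc (0:ℝ) 1 := hsub ht
    have hy : Function.update x k t ∈ unitCube d := update_mem_unitCube hxc htI
    have hd := hasDeriv_mderiv hu (hajle n (by omega)) (by rw [hajk]; omega) hy
    have heq : (fun t' => mderiv d (aj n) u (Function.update (Function.update x k t) k t'))
        = fun t' => mderiv d (aj n) u (Function.update x k t') := by
      funext t'; rw [Function.update_idem]
    have hidx : Function.update (aj n) k (aj n k + 1) = aj (n + 1) := by
      funext j
      by_cases hj : j = k
      · subst hj; rw [Function.update_self, hajk, hajk]
      · rw [Function.update_of_ne hj]; simp [haj, hj]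
    rw [heq, hidx, Function.update_self] at hd
    exact hd.mono hsub
  have hbound4 : ∀ t ∈ Set.Icc (c - h) (c + h),
      |(fun t' => mderiv d (aj 4) u (Function.update x k t')) t| ≤ K := by
    intro t ht
    exact boundD hu (hajle 4 le_rfl) (update_mem_unitCube hxc (hsub ht))
  have htay := taylor_central hh
    (hchain 0 (by omega)) (hchain 1 (by omega)) (hchain 2 (by omega))
    (hchain 3 (by omega)) hbound4
  -- rewrite the slice values
  have haj0 : aj 0 = α := by funext j; simp [haj]
  have hplus : Function.update x k (c + h) = shf d k h x := rfl
  have hminus : Function.update x k (c - h) = shf d k (-h) x := by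
    rw [shf, sub_eq_add_neg]
  have hself : Function.update x k c = x := Function.update_eq_self k x
  rw [haj0, hplus, hminus, hself] at htay
  -- algebra
  set G2 : ℝ := mderiv d (aj 2) u x with hG2
  set S : ℝ := mderiv d α u (shf d k h x) - 2 * mderiv d α u x
      + mderiv d α u (shf d k (-h) x) with hS
  have htay' : |S - h ^ 2 * G2| ≤ K * h ^ 4 / 12 := by
    have : mderiv d α u (shf d k h x) - 2 * mderiv d α u x
        + mderiv d α u (shf d k (-h) x) - h ^ 2 * G2 = S - h ^ 2 * G2 := by
      rw [hS]
    rwa [this] at htay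
  have hkey : rhsF d u k h α x = (1 / h ^ 4) * (h ^ 2 * G2 - S) := by
    rw [rhsF]
    have hne : h ≠ 0 := ne_of_gt hh
    have hidx2 : (fun j => α j + if j = k then 2 else 0) = aj 2 := rfl
    rw [hidx2, ← hG2, hS]
    field_simp
  rw [hkey, abs_mul]
  have h1 : |1 / h ^ 4| = 1 / h ^ 4 := abs_of_pos (by positivity)
  have h2 : |h ^ 2 * G2 - S| = |S - h ^ 2 * G2| := abs_sub_comm _ _
  rw [h1, h2]
  have hle : (1 / h ^ 4) * |S - h ^ 2 * G2| ≤ (1 / h ^ 4) * (K * h ^ 4 / 12) :=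
    mul_le_mul_of_nonneg_left htay' (by positivity)
  have heqq : (1 / h ^ 4) * (K * h ^ 4 / 12) = K / 12 := by
    have hne : h ≠ 0 := ne_of_gt hh
    field_simp
  linarith

lemma cont_u (hu : MemXb d 4 K u) : ContinuousOn u (unitCube d) := by
  have := contD hu (α := fun _ => 0) (fun _ => by simp)
  rwa [mderiv_zero] at this

lemma tau_cont (hu : MemXb d 4 K u) {k : Fin d} {h : ℝ} (hh : 0 < h) :
    ContinuousOn (tau d u k h) (diffDom d k h) := by
  have hsub := diffDom_subset_cube (k := k) (h := h) hh
  have hu0 := cont_u hu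
  have he2 : ∀ j, e2 d k j ≤ 4 := by
    intro j; by_cases hj : j = k <;> simp [e2, hj]
  have hA : ContinuousOn (fun y => mderiv d (e2 d k) u y) (diffDom d k h) :=
    (contD hu he2).mono hsub
  have hBp : ContinuousOn (fun y => u (shf d k h y)) (diffDom d k h) :=
    hu0.comp (continuous_shf k h).continuousOn (fun y hy => shf_mem_cube_plus hy)
  have hBm : ContinuousOn (fun y => u (shf d k (-h) y)) (diffDom d k h) :=
    hu0.comp (continuous_shf k (-h)).continuousOn (fun y hy => shf_mem_cube_minus hy)
  have hB0 : ContinuousOn u (diffDom d k h) := hu0.mono hsub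
  exact (continuousOn_const.mul hA).sub
    (continuousOn_const.mul ((hBp.sub (continuousOn_const.mul hB0)).add hBm))

lemma tau_identity {k : Fin d} {h : ℝ} (hh : 0 < h) (u : (Fin d → ℝ) → ℝ)
    (x : Fin d → ℝ) :
    pd d k (pd d k u) x
        - (u (Function.update x k (x k + h)) - 2 * u x
            + u (Function.update x k (x k - h))) / h ^ 2
      = h ^ 2 * tau d u k h x := by
  rw [← mderiv_e2]
  have hplus : Function.update x k (x k + h) = shf d k h x := rfl
  have hminus : Function.update x k (x k - h) = shf d k (-h) x := by
    rw [shf, sub_eq_add_neg]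
  rw [hplus, hminus, tau]
  have hne : h ≠ 0 := ne_of_gt hh
  field_simp

end Tau2

end TEE

/-- Truncation error expansion of the central difference stencil
(Lemma `consistency`, part 1) for `u ∈ X_4^d(K)`. -/
theorem truncation_error_expansion (d : ℕ) (hd : 1 ≤ d) (K : ℝ) (hK : 0 < K)
    (u : (Fin d → ℝ) → ℝ) (hu : MemXb d 4 K u) :
    ∃ τ : Fin d → ℝ → (Fin d → ℝ) → ℝ,
      (∀ k : Fin d, ∀ h ∈ Set.Ioc (0 : ℝ) 1,
        ContinuousOn (τ k h) (diffDom d k h) ∧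
        (∀ x ∈ diffDom d k h,
          pd d k (pd d k u) x -
              (u (Function.update x k (x k + h)) - 2 * u x +
                  u (Function.update x k (x k - h))) / h ^ 2
            = h ^ 2 * τ k h x) ∧
        (∀ α : Fin d → ℕ, (∀ i, α i = 0 ∨ α i = 4) → α k = 0 →
          HasDerivsOn d α (τ k h) (diffDom d k h) ∧
          ∀ x ∈ diffDom d k h, |mderiv d α (τ k h) x| ≤ K / 12)) ∧
      (∀ hv : Fin d → ℝ, (∀ k, hv k ∈ Set.Ioc (0 : ℝ) 1) →
        ∀ x : Fin d → ℝ, (∀ k, x ∈ diffDom d k (hv k)) →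
          (∑ k, pd d k (pd d k u) x) -
              ∑ k, (u (Function.update x k (x k + hv k)) - 2 * u x +
                  u (Function.update x k (x k - hv k))) / hv k ^ 2
            = ∑ k, hv k ^ 2 * τ k (hv k) x) := by
  refine ⟨fun k h => TEE.tau d u k h, ?_, ?_⟩
  · intro k h hh
    refine ⟨TEE.tau_cont hu hh.1, fun x _ => TEE.tau_identity hh.1 u x, ?_⟩
    intro α hα4 hαk
    exact ⟨TEE.tau_hasDerivs hu hh.1 hα4 hαk,
      fun x hx => TEE.tau_bound hu hh.1 hα4 hαk hx⟩
  · intro hv hhv x hxall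
    rw [← Finset.sum_sub_distrib]
    exact Finset.sum_congr rfl (fun k _ => TEE.tau_identity (hhv k).1 u x)
end

section
/- Let d ≥ 1 and let u ∈ X_2^d. Then there is a family of functions α_J, indexed by the nonempty subsets J ⊆ {1,…,d} and by mesh sizes (h_j)_{j∈J} with 1/h_j ∈ ℕ, where α_J(·;(h_j)_{j∈J}) : [0,1]^d → ℝ satisfies ‖α_J(·;(h_j)_{j∈J})‖_∞ ≤ (4/27)^{|J|}·‖D^{β(J)} u‖_∞ with β(J) the multi-index having entries 2 for j ∈ J and 0 otherwise, such that for every mesh vector h = (h_1,…,h_d) with 1/h_k ∈ ℕ and every x ∈ [0,1]^d, u(x) − (I u)(x) = Σ_{∅≠J⊆{1,…,d}} α_J(x;(h_j)_{j∈J})·Π_{j∈J} h_j², where I u denotes the multilinear interpolant of the restriction of u to the grid with mesh h. In particular α_J depends only on the mesh sizes h_j with j ∈ J. -/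
namespace MIE

/-- 1D interpolation error estimate via double Rolle. -/
lemma onedim (f f' f'' : ℝ → ℝ) (a b : ℝ) (h0 : 0 ≤ a) (hab : a < b) (hb1 : b ≤ 1)
    (hd1 : ∀ s ∈ Set.Icc (0:ℝ) 1, HasDerivWithinAt f (f' s) (Set.Icc 0 1) s)
    (hd2 : ∀ s ∈ Set.Icc (0:ℝ) 1, HasDerivWithinAt f' (f'' s) (Set.Icc 0 1) s)
    (M : ℝ) (hM : ∀ s ∈ Set.Icc a b, |f'' s| ≤ M)
    (x : ℝ) (hx : x ∈ Set.Icc a b) :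
    |f x - ((1 - (x - a)/(b - a)) * f a + (x - a)/(b - a) * f b)| ≤ (b - a)^2/8 * M := by
  obtain ⟨hxa, hxb⟩ := hx
  have hba : b - a ≠ 0 := by linarith
  have hM0 : 0 ≤ M := le_trans (abs_nonneg _) (hM a ⟨le_refl _, hab.le⟩)
  have hsub : Set.Icc a b ⊆ Set.Icc (0:ℝ) 1 := Set.Icc_subset_Icc h0 hb1
  rcases eq_or_lt_of_le hxa with rfl | hax
  · simp only [sub_self, zero_div, sub_zero, one_mul, zero_mul, add_zero]
    simp only [sub_self, abs_zero]
    positivity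
  rcases eq_or_lt_of_le hxb with rfl | hxb'
  · have : (x - a)/(x - a) = 1 := div_self (by linarith)
    rw [this]
    simp only [sub_self, zero_mul, one_mul, zero_add, abs_zero]
    positivity
  -- interior case
  set lam : ℝ := (x - a)/(b - a) with hlam
  set e : ℝ → ℝ := fun t => f t - (f a + (t - a) * ((f b - f a)/(b - a))) with he
  set K : ℝ := e x / ((x - a)*(x - b)) with hK
  have hxab : (x - a) * (x - b) ≠ 0 :=
    mul_ne_zero (by linarith) (by linarith)
  set ph : ℝ → ℝ := fun t => e t - K * ((t - a)*(t - b)) with hph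
  set ps : ℝ → ℝ := fun t => f' t - (f b - f a)/(b - a) - K * (2*t - a - b) with hps
  have hcontf : ContinuousOn f (Set.Icc (0:ℝ) 1) :=
    fun s hs => (hd1 s hs).continuousWithinAt
  have hcontf' : ContinuousOn f' (Set.Icc (0:ℝ) 1) :=
    fun s hs => (hd2 s hs).continuousWithinAt
  have hcontph : ContinuousOn ph (Set.Icc a b) := by
    apply ContinuousOn.sub
    · exact ((hcontf.mono hsub).sub ((continuous_const.add ((continuous_id.sub
        continuous_const).mul continuous_const)).continuousOn))
    · exact Continuous.continuousOn (by fun_prop)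
  have hderivph : ∀ t ∈ Set.Ioo a b, HasDerivAt ph (ps t) t := by
    intro t ht
    have ht01 : t ∈ Set.Ioo (0:ℝ) 1 := ⟨by linarith [ht.1], by linarith [ht.2]⟩
    have hft : HasDerivAt f (f' t) t :=
      (hd1 t (Set.mem_Icc.2 ⟨ht01.1.le, ht01.2.le⟩)).hasDerivAt
        (Icc_mem_nhds ht01.1 ht01.2)
    have h1 : HasDerivAt (fun t => f a + (t - a) * ((f b - f a)/(b - a)))
        ((f b - f a)/(b - a)) t := by
      have := (((hasDerivAt_id t).sub_const a).mul_const ((f b - f a)/(b - a))).const_add (f a)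
      simpa using this
    have h2 : HasDerivAt (fun t => K * ((t - a)*(t - b))) (K * (2*t - a - b)) t := by
      have := (((hasDerivAt_id t).sub_const a).mul ((hasDerivAt_id t).sub_const b)).const_mul K
      refine this.congr_deriv ?_
      simp only [id_eq]
      ring
    have := (hft.sub h1).sub h2
    exact this
  have hpha : ph a = 0 := by simp [hph, he]
  have heb : e b = 0 := by
    simp only [he]
    field_simp
    ring
  have hphb : ph b = 0 := by
    simp only [hph, heb]
    ring
  have hphx : ph x = 0 := by
    simp only [hph, hK]
    rw [div_mul_cancel₀ _ hxab]
    ring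
  obtain ⟨c₁, hc₁, hpsc₁⟩ := exists_hasDerivAt_eq_zero hax
    (hcontph.mono (Set.Icc_subset_Icc le_rfl hxb'.le)) (hpha.trans hphx.symm)
    (fun t ht => hderivph t ⟨ht.1, lt_trans ht.2 hxb'⟩)
  obtain ⟨c₂, hc₂, hpsc₂⟩ := exists_hasDerivAt_eq_zero hxb'
    (hcontph.mono (Set.Icc_subset_Icc hax.le le_rfl)) (hphx.trans hphb.symm)
    (fun t ht => hderivph t ⟨lt_trans hax ht.1, ht.2⟩)
  have hc12 : c₁ < c₂ := lt_trans hc₁.2 hc₂.1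
  have hcontps : ContinuousOn ps (Set.Icc c₁ c₂) := by
    apply ContinuousOn.sub
    · apply ContinuousOn.sub
      · exact (hcontf'.mono (Set.Icc_subset_Icc (by linarith [hc₁.1]) (by linarith [hc₂.2]))).mono
          (Set.Icc_subset_Icc le_rfl le_rfl)
      · exact continuousOn_const
    · exact Continuous.continuousOn (by fun_prop)
  have hderivps : ∀ t ∈ Set.Ioo c₁ c₂, HasDerivAt ps (f'' t - 2*K) t := by
    intro t ht
    have ht01 : t ∈ Set.Ioo (0:ℝ) 1 :=
      ⟨by linarith [hc₁.1, ht.1], by linarith [hc₂.2, ht.2]⟩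
    have hft : HasDerivAt f' (f'' t) t :=
      (hd2 t (Set.mem_Icc.2 ⟨ht01.1.le, ht01.2.le⟩)).hasDerivAt
        (Icc_mem_nhds ht01.1 ht01.2)
    have h2 : HasDerivAt (fun t => K * (2*t - a - b)) (2*K) t := by
      have := (((hasDerivAt_id t).const_mul 2).sub_const a).sub_const b |>.const_mul K
      refine this.congr_deriv ?_
      ring
    have := (hft.sub_const ((f b - f a)/(b - a))).sub h2
    exact this
  obtain ⟨ξ, hξ, hξ0⟩ := exists_hasDerivAt_eq_zero hc12 hcontps
    (hpsc₁.trans hpsc₂.symm) hderivps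
  have hK2 : f'' ξ = 2*K := by linarith [hξ0]
  have hKb : |K| ≤ M / 2 := by
    have hξab : ξ ∈ Set.Icc a b :=
      ⟨by linarith [hc₁.1, hξ.1], by linarith [hc₂.2, hξ.2]⟩
    have := hM ξ hξab
    rw [hK2] at this
    rw [abs_mul] at this
    simp only [abs_two] at this
    linarith [abs_nonneg K]
  -- conclude
  have hex : e x = K * ((x - a)*(x - b)) := (div_mul_cancel₀ _ hxab).symm
  have hgoal : f x - ((1 - lam) * f a + lam * f b) = e x := by
    simp only [he, hlam]
    field_simp
    ring
  rw [hgoal, hex, abs_mul]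
  have habs : |(x - a)*(x - b)| = (x - a)*(b - x) := by
    rw [show (x - a)*(x - b) = -((x - a)*(b - x)) by ring, abs_neg]
    exact abs_of_nonneg (mul_nonneg (by linarith) (by linarith))
  rw [habs]
  calc |K| * ((x - a)*(b - x)) ≤ (M/2) * ((x - a)*(b - x)) :=
        mul_le_mul_of_nonneg_right hKb (mul_nonneg (by linarith) (by linarith))
    _ ≤ (b - a)^2/8 * M := by nlinarith [sq_nonneg (a + b - 2*x)]

variable {d : ℕ}

/-- index of the cell (in direction `j`) containing `x`. -/
noncomputable def mIdx (N : Fin d → ℕ) (j : Fin d) (x : Fin d → ℝ) : ℕ :=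
  min (⌊x j * N j⌋.toNat) (N j - 1)

/-- barycentric coordinate of `x j` within its cell. -/
noncomputable def lam (N : Fin d → ℕ) (j : Fin d) (x : Fin d → ℝ) : ℝ :=
  x j * N j - mIdx N j x

/-- 1D interpolation operator in direction `j`. -/
noncomputable def Ione (N : Fin d → ℕ) (j : Fin d) (v : (Fin d → ℝ) → ℝ) :
    (Fin d → ℝ) → ℝ := fun x =>
  (1 - lam N j x) * v (Function.update x j ((mIdx N j x : ℝ) / (N j : ℝ))) +
    lam N j x * v (Function.update x j (((mIdx N j x : ℝ) + 1) / (N j : ℝ)))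

/-- 1D interpolation error operator. -/
noncomputable def Eone (N : Fin d → ℕ) (j : Fin d) (v : (Fin d → ℝ) → ℝ) :
    (Fin d → ℝ) → ℝ := fun x => v x - Ione N j v x

noncomputable def QL (N : Fin d → ℕ) (l : List (Fin d)) (v : (Fin d → ℝ) → ℝ) :
    (Fin d → ℝ) → ℝ := l.foldr (Eone N) v

noncomputable def PL (N : Fin d → ℕ) (l : List (Fin d)) (v : (Fin d → ℝ) → ℝ) :
    (Fin d → ℝ) → ℝ := l.foldr (Ione N) v

lemma mem_cube_iff {x : Fin d → ℝ} :
    x ∈ unitCube d ↔ ∀ k, 0 ≤ x k ∧ x k ≤ 1 := by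
  constructor
  · intro h k; exact ⟨h.1 k, h.2 k⟩
  · intro h; exact ⟨fun k => (h k).1, fun k => (h k).2⟩

lemma update_mem_cube {x : Fin d → ℝ} (hx : x ∈ unitCube d) {j : Fin d} {t : ℝ}
    (ht : t ∈ Set.Icc (0:ℝ) 1) : Function.update x j t ∈ unitCube d := by
  rw [mem_cube_iff] at hx ⊢
  intro k
  by_cases h : k = j
  · subst h; simp [ht.1, ht.2]
  · simp [Function.update_of_ne h, hx k]

lemma mIdx_update_ne (N : Fin d → ℕ) {j k : Fin d} (h : k ≠ j) (x : Fin d → ℝ) (t : ℝ) :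
    mIdx N j (Function.update x k t) = mIdx N j x := by
  simp [mIdx, Function.update_of_ne (Ne.symm h)]

lemma lam_update_ne (N : Fin d → ℕ) {j k : Fin d} (h : k ≠ j) (x : Fin d → ℝ) (t : ℝ) :
    lam N j (Function.update x k t) = lam N j x := by
  simp [lam, mIdx_update_ne N h, Function.update_of_ne (Ne.symm h)]

section cell
variable {N : Fin d → ℕ} {j : Fin d} {x : Fin d → ℝ}

lemma mIdx_le (hN : 1 ≤ N j) : mIdx N j x + 1 ≤ N j := by
  have : mIdx N j x ≤ N j - 1 := min_le_right _ _
  omega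

lemma cell_lower (hN : 1 ≤ N j) (hx : 0 ≤ x j) :
    (mIdx N j x : ℝ) / (N j : ℝ) ≤ x j := by
  have hNpos : (0:ℝ) < N j := by exact_mod_cast hN
  rw [div_le_iff₀ hNpos]
  have h1 : (mIdx N j x : ℝ) ≤ ((⌊x j * N j⌋.toNat : ℕ) : ℝ) := by
    exact_mod_cast min_le_left _ _
  have h3 : (0:ℤ) ≤ ⌊x j * N j⌋ := Int.floor_nonneg.2 (by positivity)
  have h2 : ((⌊x j * N j⌋.toNat : ℕ) : ℝ) ≤ x j * N j := by
    have h4 : ((⌊x j * ↑(N j)⌋.toNat : ℤ) : ℝ) ≤ x j * N j := by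
      rw [Int.toNat_of_nonneg h3]
      exact Int.floor_le _
    exact_mod_cast h4
  linarith
lemma cell_upper (hN : 1 ≤ N j) (hx : x j ≤ 1) :
    x j ≤ ((mIdx N j x : ℝ) + 1) / (N j : ℝ) := by
  have hNpos : (0:ℝ) < N j := by exact_mod_cast hN
  rw [le_div_iff₀ hNpos]
  rcases le_or_gt (⌊x j * N j⌋.toNat) (N j - 1) with h | h
  · have hm : mIdx N j x = ⌊x j * N j⌋.toNat := min_eq_left h
    rw [hm]
    have : x j * N j < ⌊x j * N j⌋ + 1 := Int.lt_floor_add_one _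
    have h0 : (0:ℤ) ≤ ⌊x j * N j⌋ ∨ ⌊x j * N j⌋ < 0 := le_or_gt _ _
    rcases h0 with h0 | h0
    · rw [show ((⌊x j * N j⌋.toNat : ℕ) : ℝ) = (⌊x j * N j⌋ : ℝ) by
        exact_mod_cast congrArg Int.cast (Int.toNat_of_nonneg h0)]
      linarith
    · have h1 : ⌊x j * N j⌋ ≤ -1 := by omega
      have h2 : x j * N j < (⌊x j * N j⌋ : ℝ) + 1 := Int.lt_floor_add_one _
      have h5 : ⌊x j * N j⌋.toNat = 0 := Int.toNat_of_nonpos h0.le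
      rw [h5]
      push_cast
      have h6 : ((⌊x j * N j⌋ : ℤ) : ℝ) ≤ -1 := by exact_mod_cast h1
      linarith
  · have hm : mIdx N j x = N j - 1 := min_eq_right h.le
    rw [hm]
    have : ((N j - 1 : ℕ) : ℝ) + 1 = (N j : ℝ) := by
      have : (1:ℕ) ≤ N j := hN
      push_cast [Nat.cast_sub this]
      ring
    rw [this]
    nlinarith

lemma cell_pt0_mem (hN : 1 ≤ N j) : ((mIdx N j x : ℝ) / (N j : ℝ)) ∈ Set.Icc (0:ℝ) 1 := by
  have hNpos : (0:ℝ) < N j := by exact_mod_cast hN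
  constructor
  · positivity
  · rw [div_le_one hNpos]
    have := mIdx_le (x := x) hN
    exact_mod_cast by omega

lemma cell_pt1_mem (hN : 1 ≤ N j) :
    (((mIdx N j x : ℝ) + 1) / (N j : ℝ)) ∈ Set.Icc (0:ℝ) 1 := by
  have hNpos : (0:ℝ) < N j := by exact_mod_cast hN
  constructor
  · positivity
  · rw [div_le_one hNpos]
    have := mIdx_le (x := x) hN
    exact_mod_cast this

lemma lam_formula (hN : 1 ≤ N j) :
    lam N j x = (x j - (mIdx N j x : ℝ) / (N j : ℝ)) /
      (((mIdx N j x : ℝ) + 1) / (N j : ℝ) - (mIdx N j x : ℝ) / (N j : ℝ)) := by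
  have hNpos : (0:ℝ) < N j := by exact_mod_cast hN
  rw [lam]
  field_simp
  ring

end cell

section comm
variable (N : Fin d → ℕ)

lemma Ione_comm (a b : Fin d) (v : (Fin d → ℝ) → ℝ) :
    Ione N a (Ione N b v) = Ione N b (Ione N a v) := by
  by_cases hab : a = b
  · subst hab; rfl
  · funext x
    simp only [Ione, lam_update_ne N hab, lam_update_ne N (Ne.symm hab),
      mIdx_update_ne N hab, mIdx_update_ne N (Ne.symm hab),
      Function.update_comm hab]
    ring

lemma Ione_sub (j : Fin d) (v w : (Fin d → ℝ) → ℝ) (x : Fin d → ℝ) :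
    Ione N j (fun y => v y - w y) x = Ione N j v x - Ione N j w x := by
  simp only [Ione]; ring

lemma Ione_Eone (a b : Fin d) (v : (Fin d → ℝ) → ℝ) (x : Fin d → ℝ) :
    Ione N a (Eone N b v) x = Ione N a v x - Ione N a (Ione N b v) x := by
  simp only [Eone, Ione]
  ring

lemma Eone_comm (a b : Fin d) (v : (Fin d → ℝ) → ℝ) :
    Eone N a (Eone N b v) = Eone N b (Eone N a v) := by
  funext x
  rw [show Eone N a (Eone N b v) x = Eone N b v x - Ione N a (Eone N b v) x from rfl,
    show Eone N b (Eone N a v) x = Eone N a v x - Ione N b (Eone N a v) x from rfl,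
    Ione_Eone, Ione_Eone, Ione_comm]
  simp only [Eone]
  ring

lemma Eone_Ione_comm (a b : Fin d) (v : (Fin d → ℝ) → ℝ) :
    Eone N a (Ione N b v) = Ione N b (Eone N a v) := by
  funext x
  rw [show Eone N a (Ione N b v) x = Ione N b v x - Ione N a (Ione N b v) x from rfl,
    Ione_Eone, Ione_comm]

private lemma foldr_perm {α β : Type*} (f : α → β → β)
    (hf : ∀ a b v, f a (f b v) = f b (f a v)) :
    ∀ {l₁ l₂ : List α}, l₁.Perm l₂ → ∀ b, l₁.foldr f b = l₂.foldr f b := by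
  intro l₁ l₂ h
  induction h with
  | nil => intro b; rfl
  | cons a h ih => intro b; simp [List.foldr_cons, ih b]
  | swap a a' l => intro b; simp [List.foldr_cons, hf]
  | trans h₁ h₂ ih₁ ih₂ => intro b; rw [ih₁ b, ih₂ b]

lemma QL_perm {l₁ l₂ : List (Fin d)} (h : l₁.Perm l₂) (v : (Fin d → ℝ) → ℝ) :
    QL N l₁ v = QL N l₂ v := by
  unfold QL; rw [foldr_perm (Eone N) (Eone_comm N) h]

lemma PL_perm {l₁ l₂ : List (Fin d)} (h : l₁.Perm l₂) (v : (Fin d → ℝ) → ℝ) :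
    PL N l₁ v = PL N l₂ v := by
  unfold PL; rw [foldr_perm (Ione N) (Ione_comm N) h]

lemma Eone_PL_comm (k : Fin d) : ∀ (l : List (Fin d)) (v : (Fin d → ℝ) → ℝ),
    Eone N k (PL N l v) = PL N l (Eone N k v) := by
  intro l
  induction l with
  | nil => intro v; rfl
  | cons a t ih =>
    intro v
    show Eone N k (Ione N a (PL N t v)) = Ione N a (PL N t (Eone N k v))
    rw [Eone_Ione_comm, ih]

end comm

/-- canonical (descending) enumeration of a finset of directions. -/
def Jlist (J : Finset (Fin d)) : List (Fin d) := (Finset.sort J (· ≤ ·)).reverse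

lemma Jlist_nodup (J : Finset (Fin d)) : (Jlist J).Nodup := by
  simpa [Jlist] using Finset.sort_nodup J _

lemma Jlist_mem {J : Finset (Fin d)} {j : Fin d} : j ∈ Jlist J ↔ j ∈ J := by
  simp [Jlist, Finset.mem_sort]

lemma Jlist_sorted (J : Finset (Fin d)) : (Jlist J).Pairwise (· > ·) := by
  rw [Jlist, List.pairwise_reverse]
  exact (Finset.sortedLT_sort J).pairwise

lemma Jlist_perm_cons {J : Finset (Fin d)} {k : Fin d} (hk : k ∉ J) :
    (Jlist (insert k J)).Perm (k :: Jlist J) := by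
  rw [← Multiset.coe_eq_coe]
  have h1 : ((Jlist (insert k J) : List (Fin d)) : Multiset (Fin d)) = (insert k J).val := by
    rw [Jlist, show ((Finset.sort (insert k J) (· ≤ ·)).reverse : Multiset (Fin d))
        = ((Finset.sort (insert k J) (· ≤ ·)) : Multiset (Fin d)) from
      Multiset.coe_eq_coe.2 (List.reverse_perm _), Finset.sort_eq]
  have h2 : ((k :: Jlist J : List (Fin d)) : Multiset (Fin d)) = (insert k J).val := by
    rw [Finset.insert_val, Multiset.ndinsert_of_notMem hk]
    have h3 : ((Jlist J : List (Fin d)) : Multiset (Fin d)) = J.val := by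
      rw [show ((Jlist J : List (Fin d)) : Multiset (Fin d))
          = ((Finset.sort J (· ≤ ·)) : Multiset (Fin d)) from
        Multiset.coe_eq_coe.2 (by simpa [Jlist] using List.reverse_perm _), Finset.sort_eq]
    rw [← h3]
    rfl
  rw [h1, h2]

noncomputable def Qf (N : Fin d → ℕ) (J : Finset (Fin d)) (v : (Fin d → ℝ) → ℝ) :
    (Fin d → ℝ) → ℝ := QL N (Jlist J) v

noncomputable def Pf (N : Fin d → ℕ) (J : Finset (Fin d)) (v : (Fin d → ℝ) → ℝ) :
    (Fin d → ℝ) → ℝ := PL N (Jlist J) v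

section incl
variable (N : Fin d → ℕ)

lemma Qf_empty (v : (Fin d → ℝ) → ℝ) : Qf N ∅ v = v := by
  simp [Qf, Jlist, QL]

lemma Pf_empty (v : (Fin d → ℝ) → ℝ) : Pf N ∅ v = v := by
  simp [Pf, Jlist, PL]

lemma Qf_insert {J : Finset (Fin d)} {k : Fin d} (hk : k ∉ J) (v : (Fin d → ℝ) → ℝ) :
    Qf N (insert k J) v = Qf N J (Eone N k v) := by
  unfold Qf
  rw [QL_perm N (Jlist_perm_cons hk) v]
  have : (k :: Jlist J).Perm (Jlist J ++ [k]) := by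
    simpa using (List.perm_append_comm (l₁ := [k]) (l₂ := Jlist J))
  rw [QL_perm N this v]
  unfold QL
  rw [List.foldr_append]
  rfl

lemma Pf_insert {J : Finset (Fin d)} {k : Fin d} (hk : k ∉ J) (v : (Fin d → ℝ) → ℝ) :
    Pf N (insert k J) v = Ione N k (Pf N J v) := by
  unfold Pf
  rw [PL_perm N (Jlist_perm_cons hk) v]
  rfl

/-- Inclusion–exclusion for the tensorized interpolation operator. -/
lemma Pf_eq_sum (S : Finset (Fin d)) (v : (Fin d → ℝ) → ℝ) (x : Fin d → ℝ) :
    Pf N S v x = ∑ J ∈ S.powerset, (-1 : ℝ)^J.card * Qf N J v x := by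
  induction S using Finset.induction_on generalizing v with
  | empty => simp [Pf_empty, Qf_empty]
  | @insert k S hk ih =>
    rw [Pf_insert N hk v]
    have key : Ione N k (Pf N S v) x = Pf N S v x - Pf N S (Eone N k v) x := by
      have h1 : Eone N k (Pf N S v) x = Pf N S v x - Ione N k (Pf N S v) x := rfl
      have h2 : Eone N k (Pf N S v) = Pf N S (Eone N k v) := by
        unfold Pf PL; exact Eone_PL_comm N k _ v
      rw [h2] at h1
      linarith [h1]
    rw [key, ih v, ih (Eone N k v)]
    rw [Finset.powerset_insert, Finset.sum_union]
    · rw [Finset.sum_image (fun J₁ h₁ J₂ h₂ he => by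
        have hk₁ : k ∉ J₁ := fun hc => hk (Finset.mem_powerset.1 h₁ hc)
        have hk₂ : k ∉ J₂ := fun hc => hk (Finset.mem_powerset.1 h₂ hc)
        rw [← Finset.erase_insert hk₁, ← Finset.erase_insert hk₂, he])]
      have : ∀ J ∈ S.powerset, (-1:ℝ)^(insert k J).card * Qf N (insert k J) v x
          = -((-1:ℝ)^J.card * Qf N J (Eone N k v) x) := by
        intro J hJ
        have hkJ : k ∉ J := fun hc => hk (Finset.mem_powerset.1 hJ hc)
        rw [Finset.card_insert_of_notMem hkJ, Qf_insert N hkJ, pow_succ]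
        ring
      rw [Finset.sum_congr rfl this, Finset.sum_neg_distrib]
      ring
    · rw [Finset.disjoint_left]
      intro J hJ hJ'
      obtain ⟨J', hJ', rfl⟩ := Finset.mem_image.1 hJ'
      exact hk (Finset.mem_powerset.1 hJ (Finset.mem_insert_self k J'))

end incl

section mfold

/-- mderiv as a fold over an arbitrary list. -/
noncomputable def mfold (β : Fin d → ℕ) (l : List (Fin d)) (u : (Fin d → ℝ) → ℝ) :
    (Fin d → ℝ) → ℝ := l.foldr (fun i v => (pd d i)^[β i] v) u

noncomputable def mderiv' (d : ℕ) (α : Fin d → ℕ) (u : (Fin d → ℝ) → ℝ) :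
    (Fin d → ℝ) → ℝ :=
  (List.finRange d).foldr (fun i v => (pd d i)^[α i] v) u

lemma mderiv'_eq_mfold (β : Fin d → ℕ) (u : (Fin d → ℝ) → ℝ) :
    mderiv' d β u = mfold β (List.finRange d) u := rfl

lemma mfold_of_zero {β : Fin d → ℕ} : ∀ {l : List (Fin d)}, (∀ i ∈ l, β i = 0) →
    ∀ u, mfold β l u = u := by
  intro l
  induction l with
  | nil => intro _ u; rfl
  | cons a t ih =>
    intro h u
    show (pd d a)^[β a] (mfold β t u) = u
    rw [h a (List.mem_cons_self), ih (fun i hi => h i (List.mem_cons_of_mem a hi)) u]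
    rfl

lemma mfold_congr {β β' : Fin d → ℕ} : ∀ {l : List (Fin d)}, (∀ i ∈ l, β i = β' i) →
    ∀ u, mfold β l u = mfold β' l u := by
  intro l
  induction l with
  | nil => intro _ u; rfl
  | cons a t ih =>
    intro h u
    show (pd d a)^[β a] (mfold β t u) = (pd d a)^[β' a] (mfold β' t u)
    rw [h a (List.mem_cons_self), ih (fun i hi => h i (List.mem_cons_of_mem a hi)) u]

/-- peel the minimal-support derivative to the outside. -/
lemma mfold_peel_out {β : Fin d → ℕ} {k : Fin d} :
    ∀ {l : List (Fin d)}, l.Pairwise (· < ·) → k ∈ l → (∀ i, β i ≠ 0 → k ≤ i) →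
    ∀ u, mfold β l u = (pd d k)^[β k] (mfold (Function.update β k 0) l u) := by
  intro l
  induction l with
  | nil => intro _ h; exact absurd h (List.not_mem_nil)
  | cons a t ih =>
    intro hp hm hsupp u
    rcases List.mem_cons.1 hm with rfl | hmt
    · -- a = k
      have hknott : k ∉ t := fun hc => lt_irrefl k ((List.pairwise_cons.1 hp).1 k hc)
      show (pd d k)^[β k] (mfold β t u)
          = (pd d k)^[β k] ((pd d k)^[Function.update β k 0 k] (mfold (Function.update β k 0) t u))
      rw [Function.update_self]
      show (pd d k)^[β k] (mfold β t u)
          = (pd d k)^[β k] (mfold (Function.update β k 0) t u)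
      rw [mfold_congr (fun i hi => (Function.update_of_ne
        (show i ≠ k by intro he; subst he; exact hknott hi) 0 β).symm) u]
    · -- k ∈ t
      have hak : a ≠ k := by
        intro he
        subst he
        exact absurd ((List.pairwise_cons.1 hp).1 a hmt) (lt_irrefl a)
      have hba : β a = 0 := by
        by_contra hba
        exact absurd (hsupp a hba) (not_le.2 ((List.pairwise_cons.1 hp).1 k hmt))
      show (pd d a)^[β a] (mfold β t u)
          = (pd d k)^[β k] ((pd d a)^[Function.update β k 0 a] (mfold (Function.update β k 0) t u))
      rw [hba, Function.update_of_ne hak, hba]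
      show mfold β t u = (pd d k)^[β k] (mfold (Function.update β k 0) t u)
      exact ih (List.pairwise_cons.1 hp).2 hmt hsupp u

/-- peel the maximal-support derivative to the inside. -/
lemma mfold_peel_in {β : Fin d → ℕ} {j : Fin d} {n : ℕ} :
    ∀ {l : List (Fin d)}, l.Pairwise (· < ·) → j ∈ l → (∀ i, β i ≠ 0 → i < j) →
    ∀ u, mfold (Function.update β j n) l u = mfold β l ((pd d j)^[n] u) := by
  intro l
  induction l with
  | nil => intro _ h; exact absurd h (List.not_mem_nil)
  | cons a t ih =>
    intro hp hm hsupp u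
    rcases List.mem_cons.1 hm with rfl | hmt
    · have hjnott : ∀ i ∈ t, j < i := (List.pairwise_cons.1 hp).1
      have hβj : β j = 0 := by
        by_contra hc
        exact absurd (hsupp j hc) (lt_irrefl j)
      have ht0 : ∀ i ∈ t, β i = 0 := fun i hi => by
        by_contra hc
        exact absurd (hsupp i hc) (not_lt.2 (hjnott i hi).le)
      have ht0' : ∀ i ∈ t, Function.update β j n i = 0 := fun i hi => by
        have hij : i ≠ j := by
          intro he
          rw [he] at hi
          exact absurd (hjnott j hi) (lt_irrefl j)
        rw [Function.update_of_ne hij]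
        exact ht0 i hi
      show (pd d j)^[Function.update β j n j] (mfold (Function.update β j n) t u)
          = (pd d j)^[β j] (mfold β t ((pd d j)^[n] u))
      rw [Function.update_self, hβj, mfold_of_zero ht0' u, mfold_of_zero ht0 _]
      rfl
    · have haj : a ≠ j := by
        intro he
        subst he
        exact absurd ((List.pairwise_cons.1 hp).1 a hmt) (lt_irrefl a)
      show (pd d a)^[Function.update β j n a] (mfold (Function.update β j n) t u)
          = (pd d a)^[β a] (mfold β t ((pd d j)^[n] u))
      rw [Function.update_of_ne haj, ih (List.pairwise_cons.1 hp).2 hmt hsupp u]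

end mfold

/-- the iterated second derivative along a list of directions
(head applied first/innermost). -/
noncomputable def DL : List (Fin d) → ((Fin d → ℝ) → ℝ) → ((Fin d → ℝ) → ℝ)
  | [], w => w
  | j :: t, w => DL t (pd d j (pd d j w))

lemma pd_two (j : Fin d) (u : (Fin d → ℝ) → ℝ) : (pd d j)^[2] u = pd d j (pd d j u) := by
  rw [show (2:ℕ) = 1 + 1 from rfl, Function.iterate_add_apply]
  rfl

lemma DL_eq_mderiv' (u' : (Fin d → ℝ) → ℝ) : ∀ (l : List (Fin d)), l.Pairwise (· > ·) →
    ∀ u, DL l u = mderiv' d (fun i => if i ∈ l then 2 else 0) u := by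
  intro l
  induction l with
  | nil =>
    intro _ u
    show u = mfold _ (List.finRange d) u
    rw [mfold_congr (β' := fun _ => 0) (fun i _ => by simp) u,
      mfold_of_zero (fun i _ => rfl) u]
  | cons j t ih =>
    intro hp u
    show DL t (pd d j (pd d j u)) = _
    rw [ih (List.pairwise_cons.1 hp).2 (pd d j (pd d j u))]
    have hjt : j ∉ t := fun hc => lt_irrefl j ((List.pairwise_cons.1 hp).1 j hc)
    have hβ : (fun i => if i ∈ (j :: t : List (Fin d)) then 2 else 0)
        = Function.update (fun i => if i ∈ t then 2 else 0) j 2 := by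
      funext i
      by_cases hij : i = j
      · subst hij; simp [hjt]
      · rw [Function.update_of_ne hij]
        simp [List.mem_cons, hij]
    rw [hβ, mderiv'_eq_mfold, mderiv'_eq_mfold,
      mfold_peel_in ((List.sortedLT_finRange d).pairwise) (List.mem_finRange j)
        (fun i hi => by
          by_cases h : i ∈ t
          · exact (List.pairwise_cons.1 hp).1 i h
          · simp [h] at hi) u,
      pd_two]

/-- the package of differentiability facts needed along a list of directions. -/
def Pkg : List (Fin d) → ((Fin d → ℝ) → ℝ) → Prop
  | [], _ => True
  | j :: t, w =>
    (∀ y ∈ unitCube d, DifferentiableWithinAt ℝ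
        (fun s => w (Function.update y j s)) (Set.Icc 0 1) (y j)) ∧
    (∀ y ∈ unitCube d, DifferentiableWithinAt ℝ
        (fun s => pd d j w (Function.update y j s)) (Set.Icc 0 1) (y j)) ∧
    Pkg t (pd d j (pd d j w))

/-- `HasDerivsOn`-style hypothesis, with `mderiv` replaced by `mderiv'`
(they are definitionally equal). -/
def HDO (u : (Fin d → ℝ) → ℝ) : Prop :=
  ∀ β : Fin d → ℕ, (∀ i, β i ≤ 2) → ∀ i : Fin d, β i < 2 → ∀ x ∈ unitCube d,
    DifferentiableWithinAt ℝ (fun t => mderiv' d β u (Function.update x i t))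
      (Set.Icc 0 1) (x i)

lemma pkg_of {u : (Fin d → ℝ) → ℝ} (hu : HDO u) :
    ∀ (l : List (Fin d)), l.Pairwise (· > ·) →
    ∀ β : Fin d → ℕ, (∀ i, β i ≤ 2) → (∀ i, β i ≠ 0 → ∀ j ∈ l, j < i) →
    Pkg l (mderiv' d β u) := by
  intro l
  induction l with
  | nil => intro _ β _ _; trivial
  | cons j t ih =>
    intro hp β hβ2 hsupp
    have hβj : β j = 0 := by
      by_contra hc
      exact absurd (hsupp j hc j (List.mem_cons_self)) (lt_irrefl j)
    have hsupp_le : ∀ i, β i ≠ 0 → j ≤ i := fun i hi =>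
      (hsupp i hi j (List.mem_cons_self)).le
    refine ⟨fun y hy => hu β hβ2 j (by omega) y hy, ?_, ?_⟩
    · -- second: pd j (mderiv' β u) = mderiv' (update β j 1) u
      have h1 : pd d j (mderiv' d β u) = mderiv' d (Function.update β j 1) u := by
        rw [mderiv'_eq_mfold, mderiv'_eq_mfold,
          mfold_peel_out (β := Function.update β j 1) (k := j)
            ((List.sortedLT_finRange d).pairwise) (List.mem_finRange j)
            (fun i hi => by
              by_cases hij : i = j
              · exact le_of_eq hij.symm
              · exact hsupp_le i (by rwa [Function.update_of_ne hij] at hi)) u,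
          Function.update_self,
          show Function.update (Function.update β j 1) j 0 = β by
            rw [Function.update_idem]
            conv_rhs => rw [← Function.update_eq_self j β]
            rw [hβj]]
        rfl
      rw [h1]
      intro y hy
      exact hu (Function.update β j 1) (fun i => by
          by_cases hij : i = j
          · subst hij; simp
          · rw [Function.update_of_ne hij]; exact hβ2 i) j
        (by simp) y hy
    · -- third: recursive package
      have h2 : pd d j (pd d j (mderiv' d β u)) = mderiv' d (Function.update β j 2) u := by
        rw [mderiv'_eq_mfold, mderiv'_eq_mfold,
          mfold_peel_out (β := Function.update β j 2) (k := j)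
            ((List.sortedLT_finRange d).pairwise) (List.mem_finRange j)
            (fun i hi => by
              by_cases hij : i = j
              · exact le_of_eq hij.symm
              · exact hsupp_le i (by rwa [Function.update_of_ne hij] at hi)) u,
          Function.update_self,
          show Function.update (Function.update β j 2) j 0 = β by
            rw [Function.update_idem]
            conv_rhs => rw [← Function.update_eq_self j β]
            rw [hβj],
          pd_two]
      rw [h2]
      exact ih (List.pairwise_cons.1 hp).2 (Function.update β j 2)
        (fun i => by
          by_cases hij : i = j
          · subst hij; simp
          · rw [Function.update_of_ne hij]; exact hβ2 i)
        (fun i hi k hk => by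
          by_cases hij : i = j
          · subst hij; exact (List.pairwise_cons.1 hp).1 k hk
          · rw [Function.update_of_ne hij] at hi
            exact hsupp i hi k (List.mem_cons_of_mem j hk))

section bound
variable (N : Fin d → ℕ)

lemma QL_hasDerivWithin (hN : ∀ k, 1 ≤ N k) (j : Fin d)
    {w pw : (Fin d → ℝ) → ℝ}
    (hw : ∀ y ∈ unitCube d, HasDerivWithinAt (fun s => w (Function.update y j s))
      (pw y) (Set.Icc 0 1) (y j)) :
    ∀ (l : List (Fin d)), j ∉ l → ∀ x ∈ unitCube d, ∀ s ∈ Set.Icc (0:ℝ) 1,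
      HasDerivWithinAt (fun t => QL N l w (Function.update x j t))
        (QL N l pw (Function.update x j s)) (Set.Icc 0 1) s := by
  intro l
  induction l with
  | nil =>
    intro _ x hx s hs
    have hy : Function.update x j s ∈ unitCube d := update_mem_cube hx hs
    have h := hw _ hy
    rw [Function.update_self] at h
    simp only [Function.update_idem] at h
    exact h
  | cons k r ih =>
    intro hjl x hx s hs
    have hjk : j ≠ k := fun he => hjl (he ▸ List.mem_cons_self)
    have hjr : j ∉ r := fun hc => hjl (List.mem_cons_of_mem k hc)
    set x0 : Fin d → ℝ := Function.update x k ((mIdx N k x : ℝ) / (N k : ℝ)) with hx0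
    set x1 : Fin d → ℝ := Function.update x k (((mIdx N k x : ℝ) + 1) / (N k : ℝ)) with hx1
    have hx0c : x0 ∈ unitCube d := update_mem_cube hx (cell_pt0_mem (hN k))
    have hx1c : x1 ∈ unitCube d := update_mem_cube hx (cell_pt1_mem (hN k))
    have key : ∀ (v : (Fin d → ℝ) → ℝ) (t : ℝ),
        QL N (k :: r) v (Function.update x j t)
          = QL N r v (Function.update x j t)
            - ((1 - lam N k x) * QL N r v (Function.update x0 j t)
              + lam N k x * QL N r v (Function.update x1 j t)) := by
      intro v t
      show Eone N k (QL N r v) (Function.update x j t) = _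
      simp only [Eone, Ione, lam_update_ne N hjk, mIdx_update_ne N hjk,
        Function.update_comm hjk]
      rfl
    have h := ih hjr x hx s hs
    have h0 := ih hjr x0 hx0c s hs
    have h1 := ih hjr x1 hx1c s hs
    have comb := h.sub ((h0.const_mul (1 - lam N k x)).add (h1.const_mul (lam N k x)))
    rw [show (fun t => QL N (k :: r) w (Function.update x j t))
        = fun t => QL N r w (Function.update x j t)
            - ((1 - lam N k x) * QL N r w (Function.update x0 j t)
              + lam N k x * QL N r w (Function.update x1 j t)) from funext (key w),
      key pw s]
    exact comb

lemma QL_bound (hN : ∀ k, 1 ≤ N k) :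
    ∀ (l : List (Fin d)), l.Nodup → ∀ (w : (Fin d → ℝ) → ℝ) (B : ℝ), Pkg l w →
    (∀ y ∈ unitCube d, |DL l w y| ≤ B) → ∀ x ∈ unitCube d,
    |QL N l w x| ≤ (l.map (fun j => ((N j : ℝ)⁻¹)^2 / 8)).prod * B := by
  intro l
  induction l with
  | nil =>
    intro _ w B _ hB x hx
    simpa [QL, DL] using hB x hx
  | cons j t ih =>
    intro hnd w B hpkg hB x hx
    obtain ⟨hjt, hndt⟩ := List.nodup_cons.1 hnd
    obtain ⟨h1, h2, hrec⟩ := hpkg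
    have hNj : (0:ℝ) < N j := by exact_mod_cast hN j
    set a : ℝ := (mIdx N j x : ℝ) / (N j : ℝ) with ha
    set b : ℝ := ((mIdx N j x : ℝ) + 1) / (N j : ℝ) with hb
    have h0a : 0 ≤ a := by positivity
    have hab : a < b := by
      rw [ha, hb, div_lt_div_iff₀ hNj hNj]
      nlinarith
    have hb1 : b ≤ 1 := (cell_pt1_mem (hN j)).2
    set f : ℝ → ℝ := fun s => QL N t w (Function.update x j s) with hf
    set f' : ℝ → ℝ := fun s => QL N t (pd d j w) (Function.update x j s) with hf'
    set f'' : ℝ → ℝ := fun s => QL N t (pd d j (pd d j w)) (Function.update x j s) with hf''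
    have hd1 : ∀ s ∈ Set.Icc (0:ℝ) 1, HasDerivWithinAt f (f' s) (Set.Icc 0 1) s :=
      fun s hs => QL_hasDerivWithin N hN j
        (fun y hy => (h1 y hy).hasDerivWithinAt) t hjt x hx s hs
    have hd2 : ∀ s ∈ Set.Icc (0:ℝ) 1, HasDerivWithinAt f' (f'' s) (Set.Icc 0 1) s :=
      fun s hs => QL_hasDerivWithin N hN j
        (fun y hy => (h2 y hy).hasDerivWithinAt) t hjt x hx s hs
    set M : ℝ := (t.map (fun j => ((N j : ℝ)⁻¹)^2 / 8)).prod * B with hM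
    have hMbd : ∀ s ∈ Set.Icc a b, |f'' s| ≤ M := by
      intro s hs
      have hs01 : s ∈ Set.Icc (0:ℝ) 1 := ⟨le_trans h0a hs.1, le_trans hs.2 hb1⟩
      exact ih hndt (pd d j (pd d j w)) B hrec
        (fun y hy => hB y hy) (Function.update x j s) (update_mem_cube hx hs01)
    have hxab : x j ∈ Set.Icc a b :=
      ⟨cell_lower (hN j) (hx.1 j), cell_upper (hN j) (hx.2 j)⟩
    have key := onedim f f' f'' a b h0a hab hb1 hd1 hd2 M hMbd (x j) hxab
    have hlf : lam N j x = (x j - a)/(b - a) := lam_formula (hN j)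
    have hQL : QL N (j :: t) w x
        = f (x j) - ((1 - (x j - a)/(b - a)) * f a + (x j - a)/(b - a) * f b) := by
      show Eone N j (QL N t w) x = _
      simp only [Eone, Ione, hf, ← hlf]
      rw [Function.update_eq_self]
    rw [hQL]
    refine le_trans key ?_
    have hba : b - a = (N j : ℝ)⁻¹ := by
      rw [ha, hb]
      field_simp
      ring
    rw [hba, List.map_cons, List.prod_cons, hM]
    apply le_of_eq
    ring
end bound

section gside
variable (N : Fin d → ℕ)

/-- the hypothesis that `g` is piecewise multilinear on the grid cells. -/
def CellPoly (g : (Fin d → ℝ) → ℝ) : Prop :=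
  ∀ j : Fin d → ℕ, (∀ k, j k + 1 ≤ N k) →
    ∃ c : Finset (Fin d) → ℝ, ∀ x : Fin d → ℝ,
      (∀ k, (j k : ℝ) / (N k : ℝ) ≤ x k ∧ x k ≤ ((j k : ℝ) + 1) / (N k : ℝ)) →
      g x = ∑ T : Finset (Fin d), c T * ∏ k ∈ T, x k

lemma Ione_of_cellPoly (hN : ∀ k, 1 ≤ N k) {g : (Fin d → ℝ) → ℝ}
    (hg : CellPoly N g) (j : Fin d) {x : Fin d → ℝ} (hx : x ∈ unitCube d) :
    Ione N j g x = g x := by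
  obtain ⟨c, hc⟩ := hg (fun k => mIdx N k x) (fun k => mIdx_le (hN k))
  set a : ℝ := (mIdx N j x : ℝ) / (N j : ℝ) with ha
  set b : ℝ := ((mIdx N j x : ℝ) + 1) / (N j : ℝ) with hb
  have hNj : (0:ℝ) < N j := by exact_mod_cast hN j
  have hcell : ∀ t, a ≤ t → t ≤ b → ∀ k,
      ((mIdx N k x : ℝ)) / (N k : ℝ) ≤ Function.update x j t k ∧
        Function.update x j t k ≤ ((mIdx N k x : ℝ) + 1) / (N k : ℝ) := by
    intro t h1 h2 k
    by_cases hk : k = j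
    · subst hk
      rw [Function.update_self]
      exact ⟨h1, h2⟩
    · rw [Function.update_of_ne hk]
      exact ⟨cell_lower (hN k) (hx.1 k), cell_upper (hN k) (hx.2 k)⟩
  set phi : ℝ → ℝ := fun t => ∑ T : Finset (Fin d), c T * ∏ k ∈ T, Function.update x j t k
    with hphi
  have hterm : ∀ (T : Finset (Fin d)) (t : ℝ),
      (∏ k ∈ T, Function.update x j t k)
        = (if j ∈ T then t else 1) * ∏ k ∈ T.erase j, x k := by
    intro T t
    by_cases hjT : j ∈ T
    · rw [if_pos hjT, ← Finset.mul_prod_erase T _ hjT, Function.update_self]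
      congr 1
      exact Finset.prod_congr rfl fun k hk =>
        Function.update_of_ne (Finset.ne_of_mem_erase hk) _ _
    · rw [if_neg hjT, one_mul, Finset.erase_eq_of_notMem hjT]
      exact Finset.prod_congr rfl fun k hk =>
        Function.update_of_ne (show k ≠ j by intro he; subst he; exact hjT hk) _ _
  set A : ℝ := ∑ T : Finset (Fin d),
    (if j ∈ T then 0 else c T * ∏ k ∈ T.erase j, x k) with hA
  set Bc : ℝ := ∑ T : Finset (Fin d),
    (if j ∈ T then c T * ∏ k ∈ T.erase j, x k else 0) with hBc
  have haff : ∀ t, phi t = A + Bc * t := by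
    intro t
    rw [hphi]
    simp only [hterm]
    rw [hA, hBc, Finset.sum_mul, ← Finset.sum_add_distrib]
    refine Finset.sum_congr rfl fun T _ => ?_
    by_cases hjT : j ∈ T <;> simp [hjT] <;> ring
  have hab2 : a ≤ b := by
    rw [ha, hb, div_le_div_iff₀ hNj hNj]
    nlinarith
  have hga : g (Function.update x j a) = phi a := by
    rw [hc _ (hcell a le_rfl hab2)]
  have hgb : g (Function.update x j b) = phi b := by
    rw [hc _ (hcell b hab2 le_rfl)]
  have hgx : g x = phi (x j) := by
    have := hc x (fun k => ⟨cell_lower (hN k) (hx.1 k), cell_upper (hN k) (hx.2 k)⟩)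
    rw [this, hphi]
    simp [Function.update_eq_self]
  have hbar : (1 - lam N j x) * a + lam N j x * b = x j := by
    rw [lam, ha, hb]
    field_simp
    ring
  show (1 - lam N j x) * g (Function.update x j a) + lam N j x * g (Function.update x j b) = g x
  rw [hga, hgb, hgx, haff, haff, haff]
  linear_combination Bc * hbar

lemma PL_of_cellPoly (hN : ∀ k, 1 ≤ N k) {g : (Fin d → ℝ) → ℝ}
    (hg : CellPoly N g) : ∀ (l : List (Fin d)) {x : Fin d → ℝ}, x ∈ unitCube d →
    PL N l g x = g x := by
  intro l
  induction l with
  | nil => intro x _; rfl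
  | cons j t ih =>
    intro x hx
    show Ione N j (PL N t g) x = g x
    have h0 : Function.update x j ((mIdx N j x : ℝ) / (N j : ℝ)) ∈ unitCube d :=
      update_mem_cube hx (cell_pt0_mem (hN j))
    have h1 : Function.update x j (((mIdx N j x : ℝ) + 1) / (N j : ℝ)) ∈ unitCube d :=
      update_mem_cube hx (cell_pt1_mem (hN j))
    show (1 - lam N j x) * PL N t g (Function.update x j ((mIdx N j x : ℝ) / (N j : ℝ)))
        + lam N j x * PL N t g (Function.update x j (((mIdx N j x : ℝ) + 1) / (N j : ℝ))) = g x
    rw [ih h0, ih h1]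
    exact Ione_of_cellPoly N hN hg j hx

/-- `PL N l v x` only depends on the values of `v` at points obtained from `x`
by snapping the coordinates in `l` to the grid. -/
lemma PL_snap (hN : ∀ k, 1 ≤ N k) : ∀ (l : List (Fin d)) (v v' : (Fin d → ℝ) → ℝ) (x : Fin d → ℝ),
    x ∈ unitCube d →
    (∀ y : Fin d → ℝ, ((∀ k, k ∉ l → y k = x k) ∧
      ∀ k ∈ l, ∃ i : ℕ, i ≤ N k ∧ y k = (i : ℝ) / (N k : ℝ)) → v y = v' y) →
    PL N l v x = PL N l v' x := by
  intro l
  induction l with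
  | nil =>
    intro v v' x _ h
    exact h x ⟨fun k _ => rfl, fun k hk => absurd hk (List.not_mem_nil)⟩
  | cons j t ih =>
    intro v v' x hx h
    show Ione N j (PL N t v) x = Ione N j (PL N t v') x
    have key : ∀ (p : ℝ) (i : ℕ), i ≤ N j → p = (i : ℝ) / (N j : ℝ) →
        p ∈ Set.Icc (0:ℝ) 1 →
        PL N t v (Function.update x j p) = PL N t v' (Function.update x j p) := by
      intro p i hiN hp hp01
      apply ih v v' _ (update_mem_cube hx hp01)
      intro y ⟨hy1, hy2⟩
      apply h
      constructor
      · intro k hk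
        have hkj : k ≠ j := fun he => hk (he ▸ List.mem_cons_self)
        have hkt : k ∉ t := fun hc => hk (List.mem_cons_of_mem j hc)
        rw [hy1 k hkt, Function.update_of_ne hkj]
      · intro k hk
        rcases List.mem_cons.1 hk with rfl | hkt
        · by_cases hkt2 : k ∈ t
          · exact hy2 k hkt2
          · refine ⟨i, hiN, ?_⟩
            rw [hy1 k hkt2, Function.update_self, hp]
        · exact hy2 k hkt
    show (1 - lam N j x) * PL N t v (Function.update x j ((mIdx N j x : ℝ) / (N j : ℝ)))
        + lam N j x * PL N t v (Function.update x j (((mIdx N j x : ℝ) + 1) / (N j : ℝ)))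
      = (1 - lam N j x) * PL N t v' (Function.update x j ((mIdx N j x : ℝ) / (N j : ℝ)))
        + lam N j x * PL N t v' (Function.update x j (((mIdx N j x : ℝ) + 1) / (N j : ℝ)))
    rw [key _ (mIdx N j x) (by have := mIdx_le (N := N) (j := j) (x := x) (hN j); omega) rfl
        (cell_pt0_mem (hN j)),
      key _ (mIdx N j x + 1) (by exact_mod_cast mIdx_le (hN j)) (by push_cast; ring)
        (cell_pt1_mem (hN j))]

lemma QL_congr_N {N' : Fin d → ℕ} : ∀ (l : List (Fin d)), (∀ j ∈ l, N j = N' j) →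
    ∀ v, QL N l v = QL N' l v := by
  intro l
  induction l with
  | nil => intro _ v; rfl
  | cons j t ih =>
    intro h v
    show Eone N j (QL N t v) = Eone N' j (QL N' t v)
    rw [ih (fun i hi => h i (List.mem_cons_of_mem j hi)) v]
    have hNj : N j = N' j := h j (List.mem_cons_self)
    funext x
    simp only [Eone, Ione, lam, mIdx, hNj]

end gside

lemma Jlist_coe (J : Finset (Fin d)) :
    ((Jlist J : List (Fin d)) : Multiset (Fin d)) = J.val := by
  rw [show ((Jlist J : List (Fin d)) : Multiset (Fin d))
      = ((Finset.sort J (· ≤ ·)) : Multiset (Fin d)) from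
    Multiset.coe_eq_coe.2 (by simpa [Jlist] using List.reverse_perm _), Finset.sort_eq]

end MIE

/-- The coefficient functions in the interpolation error expansion. -/
noncomputable def aCoef (d : ℕ) (u : (Fin d → ℝ) → ℝ) (J : Finset (Fin d))
    (N : Fin d → ℕ) (x : Fin d → ℝ) : ℝ :=
  (-1 : ℝ) ^ (J.card + 1) * MIE.Qf N J u x * ∏ j ∈ J, (N j : ℝ) ^ 2

/-- Multilinear interpolation error expansion for functions with bounded mixed
derivatives (Theorem `lemma-approx`): for `u ∈ X_2^d`,
`u - Iu = Σ_{∅≠J} α_J(·;(h_j)_{j∈J}) Π_{j∈J} h_j²` with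
`‖α_J‖_∞ ≤ (4/27)^{|J|} ‖D^{β(J)}u‖_∞`. -/
theorem multilinear_interpolation_error (d : ℕ) (hd : 1 ≤ d)
    (u : (Fin d → ℝ) → ℝ) (hu : MemX d 2 u) :
    ∃ a : Finset (Fin d) → (Fin d → ℕ) → (Fin d → ℝ) → ℝ,
      (∀ (J : Finset (Fin d)) (N N' : Fin d → ℕ),
        (∀ j ∈ J, N j = N' j) → a J N = a J N') ∧
      (∀ J : Finset (Fin d), J.Nonempty → ∀ N : Fin d → ℕ, (∀ k, 1 ≤ N k) →
        ∀ B : ℝ,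
          (∀ y ∈ unitCube d,
            |mderiv d (fun i => if i ∈ J then 2 else 0) u y| ≤ B) →
          ∀ x ∈ unitCube d, |a J N x| ≤ (4 / 27 : ℝ) ^ J.card * B) ∧
      (∀ N : Fin d → ℕ, (∀ k, 1 ≤ N k) → ∀ g : (Fin d → ℝ) → ℝ,
        ((∀ i : Fin d → ℕ, (∀ k, i k ≤ N k) →
            g (fun k => (i k : ℝ) / (N k : ℝ)) = u (fun k => (i k : ℝ) / (N k : ℝ))) ∧
         (∀ j : Fin d → ℕ, (∀ k, j k + 1 ≤ N k) →
            ∃ c : Finset (Fin d) → ℝ, ∀ x : Fin d → ℝ,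
              (∀ k, (j k : ℝ) / (N k : ℝ) ≤ x k ∧ x k ≤ ((j k : ℝ) + 1) / (N k : ℝ)) →
              g x = ∑ T : Finset (Fin d), c T * ∏ k ∈ T, x k)) →
        ∀ x ∈ unitCube d,
          u x - g x =
            ∑ J ∈ Finset.univ.filter (fun J : Finset (Fin d) => J.Nonempty),
              a J N x * ∏ j ∈ J, ((N j : ℝ)⁻¹) ^ 2) := by
    classical
  refine ⟨aCoef d u, ?_, ?_, ?_⟩
  · -- dependence on N only through J
    intro J N N' h
    funext x
    unfold aCoef MIE.Qf
    rw [MIE.QL_congr_N N (MIE.Jlist J) (fun j hj => h j (MIE.Jlist_mem.1 hj)) u,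
      Finset.prod_congr rfl (fun j hj => by rw [h j hj])]
  · -- the bound
    intro J hJne N hN B hBnd x hx
    have hB0 : 0 ≤ B := by
      have h0c : (fun _ : Fin d => (0:ℝ)) ∈ unitCube d :=
        ⟨fun i => le_rfl, fun i => zero_le_one⟩
      exact le_trans (abs_nonneg _) (hBnd _ h0c)
    have hHDO : MIE.HDO u := hu.1
    have hpkg : MIE.Pkg (MIE.Jlist J) u := by
      have h := MIE.pkg_of hHDO (MIE.Jlist J) (MIE.Jlist_sorted J) (fun _ => 0)
        (fun i => by norm_num) (fun i hi => absurd rfl hi)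
      rwa [show MIE.mderiv' d (fun _ => (0:ℕ)) u = u from
        MIE.mfold_of_zero (fun i _ => rfl) u] at h
    have hβ : (fun i => if i ∈ MIE.Jlist J then 2 else 0)
        = (fun i => if i ∈ J then (2:ℕ) else 0) := by
      funext i
      simp [MIE.Jlist_mem]
    have hDL : ∀ y ∈ unitCube d, |MIE.DL (MIE.Jlist J) u y| ≤ B := by
      intro y hy
      rw [MIE.DL_eq_mderiv' u (MIE.Jlist J) (MIE.Jlist_sorted J) u, hβ]
      exact hBnd y hy
    have hmain := MIE.QL_bound N hN (MIE.Jlist J) (MIE.Jlist_nodup J) u B hpkg hDL x hx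
    have hprod : ((MIE.Jlist J).map (fun j => ((N j : ℝ)⁻¹)^2 / 8)).prod
        = ∏ j ∈ J, ((N j : ℝ)⁻¹)^2 / 8 := by
      rw [Finset.prod_eq_multiset_prod, ← MIE.Jlist_coe, Multiset.map_coe,
        Multiset.prod_coe]
    have habs : |aCoef d u J N x|
        = |MIE.Qf N J u x| * ∏ j ∈ J, (N j : ℝ)^2 := by
      unfold aCoef
      rw [abs_mul, abs_mul, abs_pow, abs_neg, abs_one, one_pow, one_mul,
        abs_of_nonneg (show (0:ℝ) ≤ ∏ j ∈ J, (N j : ℝ)^2 from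
          Finset.prod_nonneg fun j _ => by positivity)]
    rw [habs]
    have hQf : |MIE.Qf N J u x| ≤ (∏ j ∈ J, ((N j : ℝ)⁻¹)^2 / 8) * B := by
      rw [← hprod]
      exact hmain
    calc |MIE.Qf N J u x| * ∏ j ∈ J, (N j : ℝ)^2
        ≤ ((∏ j ∈ J, ((N j : ℝ)⁻¹)^2 / 8) * B) * ∏ j ∈ J, (N j : ℝ)^2 := by
          apply mul_le_mul_of_nonneg_right hQf
          exact Finset.prod_nonneg (fun j _ => by positivity)
      _ = (∏ j ∈ J, (((N j : ℝ)⁻¹)^2 / 8 * (N j : ℝ)^2)) * B := by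
          rw [Finset.prod_mul_distrib]
          ring
      _ = (1/8 : ℝ)^J.card * B := by
          congr 1
          rw [show (1/8 : ℝ)^J.card = ∏ _j ∈ J, (1/8 : ℝ) by
            rw [Finset.prod_const]]
          refine Finset.prod_congr rfl fun j _ => ?_
          have hNj : (N j : ℝ) ≠ 0 := by
            have := hN j
            positivity
          field_simp
      _ ≤ (4/27 : ℝ)^J.card * B := by
          apply mul_le_mul_of_nonneg_right _ hB0
          apply pow_le_pow_left₀ (by norm_num) (by norm_num)
  · -- the expansion
    intro N hN g ⟨hg1, hg2⟩ x hx
    have hg2' : MIE.CellPoly N g := hg2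
    have hgu : MIE.Pf N Finset.univ g x = MIE.Pf N Finset.univ u x := by
      apply MIE.PL_snap N hN (MIE.Jlist Finset.univ) g u x hx
      intro y ⟨h1, h2⟩
      choose i hi using fun k => h2 k (MIE.Jlist_mem.2 (Finset.mem_univ k))
      have hy : y = fun k => (i k : ℝ) / (N k : ℝ) := funext fun k => (hi k).2
      rw [hy]
      exact hg1 i fun k => (hi k).1
    have hgx : g x = MIE.Pf N Finset.univ g x :=
      (MIE.PL_of_cellPoly N hN hg2' (MIE.Jlist Finset.univ) hx).symm
    have hPsum := MIE.Pf_eq_sum N Finset.univ u x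
    rw [Finset.powerset_univ] at hPsum
    have hsplit := Finset.sum_filter_add_sum_filter_not Finset.univ
      (fun J : Finset (Fin d) => J.Nonempty)
      (fun J => (-1:ℝ)^J.card * MIE.Qf N J u x)
    have hempty : Finset.univ.filter (fun J : Finset (Fin d) => ¬J.Nonempty)
        = {(∅ : Finset (Fin d))} := by
      ext J
      simp [Finset.not_nonempty_iff_eq_empty]
    rw [hempty, Finset.sum_singleton] at hsplit
    have hQfe : MIE.Qf N (∅ : Finset (Fin d)) u x = u x := by
      rw [MIE.Qf_empty]
    rw [hQfe] at hsplit
    simp only [Finset.card_empty, pow_zero, one_mul] at hsplit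
    have hterm : ∀ J ∈ Finset.univ.filter (fun J : Finset (Fin d) => J.Nonempty),
        aCoef d u J N x * ∏ j ∈ J, ((N j : ℝ)⁻¹)^2
          = -((-1:ℝ)^J.card * MIE.Qf N J u x) := by
      intro J _
      have hprod1 : (∏ j ∈ J, (N j : ℝ)^2) * ∏ j ∈ J, ((N j : ℝ)⁻¹)^2 = 1 := by
        rw [← Finset.prod_mul_distrib]
        apply Finset.prod_eq_one
        intro j _
        have hNj : (N j : ℝ) ≠ 0 := by
          have := hN j
          positivity
        field_simp
      calc aCoef d u J N x * ∏ j ∈ J, ((N j : ℝ)⁻¹)^2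
          = (-1:ℝ)^(J.card+1) * MIE.Qf N J u x
              * ((∏ j ∈ J, (N j : ℝ)^2) * ∏ j ∈ J, ((N j : ℝ)⁻¹)^2) := by
            unfold aCoef
            ring
        _ = -((-1:ℝ)^J.card * MIE.Qf N J u x) := by
            rw [hprod1, pow_succ]
            ring
    rw [Finset.sum_congr rfl hterm]
    have hgoal : u x - g x
        = u x - MIE.Pf N Finset.univ u x := by rw [hgx, hgu]
    rw [hgoal, hPsum, ← hsplit]
    rw [Finset.sum_neg_distrib]
    ring
end

section
/- Let d ≥ 1 and let U : ℕ^d → ℝ. Define the hierarchical surplus δU = δ_1⋯δ_d U, where for each k, (δ_k V)(i) = V(i) − V(i − e_k) if i_k > 0 and (δ_k V)(i) = V(i) if i_k = 0. Then for every n ≥ d − 1, Σ_{i∈ℕ^d, i_1+⋯+i_d ≤ n} (δU)(i) = Σ_{k=0}^{d−1} (−1)^k · binom(d−1, k) · Σ_{i∈ℕ^d, i_1+⋯+i_d = n−k} U(i). -/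
/-- One-directional hierarchical difference operator `δ_k`. -/
def dOp (d : ℕ) (k : Fin d) (V : (Fin d → ℕ) → ℝ) : (Fin d → ℕ) → ℝ :=
  fun i => if i k = 0 then V i else V i - V (Function.update i k (i k - 1))

/-- Hierarchical surplus `δU = δ_1 ⋯ δ_d U`. -/
def surplus (d : ℕ) (U : (Fin d → ℕ) → ℝ) : (Fin d → ℕ) → ℝ :=
  (List.finRange d).foldr (fun k V => dOp d k V) U

open Finset

lemma foldr_dOp_expand (d : ℕ) (U : (Fin d → ℕ) → ℝ) (l : List (Fin d)) (hl : l.Nodup)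
    (i : Fin d → ℕ) :
    (l.foldr (fun k V => dOp d k V) U) i
      = ∑ s ∈ (l.toFinset.filter fun k => i k ≠ 0).powerset,
          (-1 : ℝ) ^ s.card * U (fun k => if k ∈ s then i k - 1 else i k) := by
  induction l generalizing i with
  | nil => simp
  | cons a l ih =>
    have ha : a ∉ l := (List.nodup_cons.1 hl).1
    have hln : l.Nodup := (List.nodup_cons.1 hl).2
    have htf : (a :: l).toFinset = insert a l.toFinset := by simp
    simp only [List.foldr_cons]
    show dOp d a (l.foldr (fun k V => dOp d k V) U) i = _
    rw [dOp, htf]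
    by_cases h : i a = 0
    · rw [if_pos h, ih hln i, filter_insert, if_neg (by simp [h])]
    · rw [if_neg h, ih hln i, ih hln (Function.update i a (i a - 1)),
        filter_insert, if_pos h]
      have haF : a ∉ l.toFinset.filter fun k => i k ≠ 0 := by
        simp [List.mem_toFinset, ha]
      rw [sum_powerset_insert haF]
      have hF : (l.toFinset.filter fun k => Function.update i a (i a - 1) k ≠ 0)
          = l.toFinset.filter fun k => i k ≠ 0 := by
        apply filter_congr
        intro k hk
        have hka : k ≠ a := by rintro rfl; exact ha (List.mem_toFinset.1 hk)
        rw [Function.update_of_ne hka]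
      rw [hF]
      rw [sub_eq_add_neg, ← Finset.sum_neg_distrib]
      congr 1
      apply Finset.sum_congr rfl
      intro s hs
      have has : a ∉ s := fun h' => haF (Finset.mem_powerset.1 hs h')
      rw [Finset.card_insert_of_notMem has, pow_succ]
      have : (fun k => if k ∈ s then Function.update i a (i a - 1) k - 1
          else Function.update i a (i a - 1) k)
          = fun k => if k ∈ insert a s then i k - 1 else i k := by
        funext k
        by_cases hk : k = a
        · subst hk
          simp [has, Function.update_self]
        · rw [Function.update_of_ne hk]
          simp [Finset.mem_insert, hk]
      rw [this]
      ring

lemma sum_card_ind (d : ℕ) (s : Finset (Fin d)) :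
    (∑ k : Fin d, if k ∈ s then 1 else 0) = s.card := by
  simp [Finset.sum_ite_mem]

lemma sum_dec (d n : ℕ) (s : Finset (Fin d)) (U : (Fin d → ℕ) → ℝ) :
    ∑ i ∈ (Fintype.piFinset fun _ : Fin d => Finset.range (n + 1)).filter
        (fun i => (∑ k, i k ≤ n) ∧ ∀ k ∈ s, i k ≠ 0),
      U (fun k => if k ∈ s then i k - 1 else i k)
    = ∑ j ∈ (Fintype.piFinset fun _ : Fin d => Finset.range (n + 1)).filter
        (fun j => (∑ k, j k) + s.card ≤ n), U j := by
  have key : ∀ i : Fin d → ℕ, (∀ k ∈ s, i k ≠ 0) →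
      (∑ k, if k ∈ s then i k - 1 else i k) + s.card = ∑ k, i k := by
    intro i hi
    rw [← sum_card_ind d s, ← Finset.sum_add_distrib]
    apply Finset.sum_congr rfl
    intro k _
    by_cases hk : k ∈ s
    · have := hi k hk; simp [hk]; omega
    · simp [hk]
  have key2 : ∀ j : Fin d → ℕ,
      (∑ k, if k ∈ s then j k + 1 else j k) = (∑ k, j k) + s.card := by
    intro j
    rw [← sum_card_ind d s, ← Finset.sum_add_distrib]
    apply Finset.sum_congr rfl
    intro k _
    by_cases hk : k ∈ s <;> simp [hk]
  apply Finset.sum_nbij' (fun i k => if k ∈ s then i k - 1 else i k)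
    (fun j k => if k ∈ s then j k + 1 else j k)
  · intro i hi
    rw [Finset.mem_filter, Fintype.mem_piFinset] at hi ⊢
    obtain ⟨hbox, hsum, hpos⟩ := hi
    constructor
    · intro k
      have := hbox k
      rw [Finset.mem_range] at this ⊢
      by_cases hk : k ∈ s <;> simp [hk] <;> omega
    · rw [key i hpos]; exact hsum
  · intro j hj
    rw [Finset.mem_filter, Fintype.mem_piFinset] at hj ⊢
    obtain ⟨hbox, hsum⟩ := hj
    have hle : ∀ k, (if k ∈ s then j k + 1 else j k) ≤ (∑ k, j k) + s.card := by
      intro k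
      calc (if k ∈ s then j k + 1 else j k)
          ≤ ∑ k', if k' ∈ s then j k' + 1 else j k' :=
            Finset.single_le_sum (f := fun k' => if k' ∈ s then j k' + 1 else j k') (fun _ _ => Nat.zero_le _) (Finset.mem_univ k)
        _ = (∑ k, j k) + s.card := key2 j
    refine ⟨fun k => ?_, ?_, fun k hk => by simp [hk]⟩
    · rw [Finset.mem_range]
      exact lt_of_le_of_lt (le_trans (hle k) hsum) (Nat.lt_succ_self n)
    · rw [key2 j]; exact hsum
  · intro i hi
    rw [Finset.mem_filter] at hi
    funext k
    by_cases hk : k ∈ s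
    · have := hi.2.2 k hk; simp [hk]; omega
    · simp [hk]
  · intro j _
    funext k
    by_cases hk : k ∈ s <;> simp [hk]
  · intro i _; rfl

lemma alt_pascal (m : ℕ) (T : ℕ → ℝ) :
    ∑ k ∈ Finset.range (m + 2), (-1 : ℝ) ^ k * ((m + 1).choose k : ℝ) * T k
      = ∑ k ∈ Finset.range (m + 1), (-1 : ℝ) ^ k * (m.choose k : ℝ) * (T k - T (k + 1)) := by
  have h2 : ∑ k ∈ Finset.range (m + 1), (-1 : ℝ) ^ (k + 1) * (m.choose (k + 1) : ℝ) * T (k + 1)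
      = (∑ k ∈ Finset.range (m + 1), (-1 : ℝ) ^ k * (m.choose k : ℝ) * T k) - T 0 := by
    have h := Finset.sum_range_succ' (fun k => (-1 : ℝ) ^ k * (m.choose k : ℝ) * T k) (m + 1)
    rw [Finset.sum_range_succ] at h
    simp only [Nat.choose_succ_self, Nat.cast_zero, mul_zero, zero_mul, add_zero,
      pow_zero, Nat.choose_zero_right, Nat.cast_one, one_mul, mul_one] at h
    linarith
  have hL : ∑ k ∈ Finset.range (m + 2), (-1 : ℝ) ^ k * ((m + 1).choose k : ℝ) * T k
      = (∑ k ∈ Finset.range (m + 1),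
          (-1 : ℝ) ^ (k + 1) * ((m + 1).choose (k + 1) : ℝ) * T (k + 1)) + T 0 := by
    rw [Finset.sum_range_succ' (fun k => (-1 : ℝ) ^ k * ((m + 1).choose k : ℝ) * T k) (m + 1)]
    simp
  have hsplit : ∀ k, (-1 : ℝ) ^ (k + 1) * ((m + 1).choose (k + 1) : ℝ) * T (k + 1)
      = -((-1 : ℝ) ^ k * (m.choose k : ℝ) * T (k + 1))
        + (-1 : ℝ) ^ (k + 1) * (m.choose (k + 1) : ℝ) * T (k + 1) := by
    intro k
    rw [Nat.choose_succ_succ]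
    push_cast
    ring
  rw [hL]
  simp only [hsplit]
  rw [Finset.sum_add_distrib, h2, Finset.sum_neg_distrib]
  simp only [mul_sub]
  rw [Finset.sum_sub_distrib]
  ring

/-- The sparse grid combination formula: summing the hierarchical surplus over
`|i|₁ ≤ n` equals the alternating combination of the level sums. -/
theorem combination_formula (d : ℕ) (hd : 1 ≤ d) (U : (Fin d → ℕ) → ℝ)
    (n : ℕ) (hn : d - 1 ≤ n) :
    ∑ i ∈ (Fintype.piFinset fun _ : Fin d => Finset.range (n + 1)).filter
        (fun i => ∑ k, i k ≤ n), surplus d U i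
      = ∑ k ∈ Finset.range d, (-1 : ℝ) ^ k * (Nat.choose (d - 1) k : ℝ) *
          ∑ i ∈ (Fintype.piFinset fun _ : Fin d => Finset.range (n + 1)).filter
              (fun i => ∑ j, i j = n - k), U i := by
  obtain ⟨m, rfl⟩ : ∃ m, d = m + 1 := ⟨d - 1, (Nat.succ_pred_eq_of_pos hd).symm⟩
  have hmn : m ≤ n := by simpa using hn
  set box := Fintype.piFinset fun _ : Fin (m + 1) => Finset.range (n + 1) with hbox
  set T : ℕ → ℝ := fun c => ∑ j ∈ box.filter (fun j => (∑ k, j k) + c ≤ n), U j with hT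
  -- Step 1: expand the surplus and extend the inner sum to all subsets
  have step1 : ∀ i : Fin (m + 1) → ℕ, surplus (m + 1) U i
      = ∑ s ∈ (Finset.univ : Finset (Fin (m + 1))).powerset,
          if (∀ k ∈ s, i k ≠ 0) then
            (-1 : ℝ) ^ s.card * U (fun k => if k ∈ s then i k - 1 else i k)
          else 0 := by
    intro i
    rw [surplus, foldr_dOp_expand (m + 1) U (List.finRange (m + 1)) (List.nodup_finRange _) i]
    rw [show (List.finRange (m + 1)).toFinset = Finset.univ from List.toFinset_finRange _]
    rw [show (Finset.univ.filter fun k => i k ≠ 0).powerset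
        = Finset.univ.powerset.filter (fun s => ∀ k ∈ s, i k ≠ 0) by
      ext s
      simp [Finset.mem_powerset, Finset.subset_iff]]
    rw [Finset.sum_filter]
  simp only [step1]
  rw [Finset.sum_comm]
  -- Step 2: per subset, apply the shift bijection
  have step2 : ∀ s ∈ (Finset.univ : Finset (Fin (m + 1))).powerset,
      (∑ i ∈ box.filter (fun i => ∑ k, i k ≤ n),
        if (∀ k ∈ s, i k ≠ 0) then
          (-1 : ℝ) ^ s.card * U (fun k => if k ∈ s then i k - 1 else i k)
        else 0)
      = (-1 : ℝ) ^ s.card * T s.card := by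
    intro s _
    rw [← Finset.sum_filter, Finset.filter_filter]
    rw [Finset.sum_congr rfl (fun i _ => rfl), ← Finset.mul_sum]
    rw [hT]
    congr 1
    exact sum_dec (m + 1) n s U
  rw [Finset.sum_congr rfl step2]
  -- Step 3: group by cardinality
  rw [Finset.sum_powerset]
  have step3 : ∀ k ∈ Finset.range ((Finset.univ : Finset (Fin (m + 1))).card + 1),
      (∑ s ∈ Finset.powersetCard k (Finset.univ : Finset (Fin (m + 1))),
        (-1 : ℝ) ^ s.card * T s.card)
      = (-1 : ℝ) ^ k * ((m + 1).choose k : ℝ) * T k := by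
    intro k _
    rw [Finset.sum_congr rfl (fun s hs => by
      rw [(Finset.mem_powersetCard.1 hs).2])]
    rw [Finset.sum_const, Finset.card_powersetCard, Finset.card_univ, Fintype.card_fin,
      nsmul_eq_mul]
    ring
  rw [Finset.sum_congr rfl step3]
  have hcard : (Finset.univ : Finset (Fin (m + 1))).card + 1 = m + 2 := by
    rw [Finset.card_univ, Fintype.card_fin]
  rw [hcard, alt_pascal m T]
  -- Step 4: identify T k - T (k+1) with the level sum
  apply Finset.sum_congr rfl
  intro k hk
  have hkm : k ≤ m := Nat.lt_succ_iff.1 (Finset.mem_range.1 hk)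
  have hkn : k ≤ n := le_trans hkm hmn
  have hsplit : box.filter (fun j => (∑ k', j k') + k ≤ n)
      = box.filter (fun j => (∑ k', j k') + (k + 1) ≤ n)
        ∪ box.filter (fun j => ∑ k', j k' = n - k) := by
    rw [← Finset.filter_or]
    apply Finset.filter_congr
    intro j _
    constructor <;> intro h <;> omega
  have hdisj : Disjoint (box.filter (fun j => (∑ k', j k') + (k + 1) ≤ n))
      (box.filter (fun j => ∑ k', j k' = n - k)) := by
    rw [Finset.disjoint_left]
    intro j hj1 hj2
    rw [Finset.mem_filter] at hj1 hj2
    omega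
  have : T k = T (k + 1) + ∑ j ∈ box.filter (fun j => ∑ k', j k' = n - k), U j := by
    rw [hT]
    simp only
    rw [hsplit, Finset.sum_union hdisj]
  rw [show m + 1 - 1 = m from rfl]
  rw [this]
  ring
end

section
/- Let d ≥ 1, 1 ≤ m ≤ d, let p ≥ 1 be an integer, and let v : (0,∞)^m → ℝ. Define F : ℕ → ℝ by F(n) = Σ_{i∈ℕ^d, i_1+⋯+i_d = n} v(2^{−i_1},…,2^{−i_m})·2^{−p(i_1+⋯+i_m)}, and define s_l = Σ_{j∈ℕ^m, j_1+⋯+j_m = l} v(2^{−j_1},…,2^{−j_m}) for l ∈ ℕ. Then for every n ∈ ℕ, (δ^{d−1} F)(n) = 2^{−p(n+d−1)} · Σ_{i=0}^{m−1} binom(m−1, i) · (−2^p)^i · s_{n+d−1−i}, where δ is the forward difference operator. -/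
open Finset


/-- Forward difference operator: `(fdiff F) n = F (n+1) - F n`. -/
def fdiff (F : ℕ → ℝ) : ℕ → ℝ := fun n => F (n + 1) - F n

lemma fdiff_shift (k : ℕ) (F : ℕ → ℝ) :
    fdiff^[k] (fun n => F (n + 1)) = fun n => fdiff^[k] F (n + 1) := by
  induction k generalizing F with
  | zero => rfl
  | succ k ih =>
    rw [Function.iterate_succ_apply, Function.iterate_succ_apply]
    exact ih (fdiff F)

lemma fdiff_shift' (k e : ℕ) (F : ℕ → ℝ) :
    fdiff^[k] (fun n => F (n + e)) = fun n => fdiff^[k] F (n + e) := by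
  induction k generalizing F with
  | zero => rfl
  | succ k ih =>
    have h : fdiff (fun n => F (n + e)) = fun n => fdiff F (n + e) := by
      funext n; simp only [fdiff]; rw [add_right_comm]
    rw [Function.iterate_succ_apply, h, ih (fdiff F), ← Function.iterate_succ_apply]

lemma fdiff_partial_sum (g : ℕ → ℝ) :
    fdiff (fun n => ∑ t ∈ range (n + 1), g t) = fun n => g (n + 1) := by
  funext n
  simp [fdiff, Finset.sum_range_succ]

lemma filter_pi_eq (c l : ℕ) :
    ((Fintype.piFinset fun _ : Fin c => range (l + 1)).filter (fun i => ∑ k, i k = l))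
      = Finset.Nat.antidiagonalTuple c l := by
  ext i
  simp only [mem_filter, Fintype.mem_piFinset, mem_range, Finset.Nat.mem_antidiagonalTuple]
  constructor
  · exact fun h => h.2
  · intro h
    refine ⟨fun k => ?_, h⟩
    have := Finset.single_le_sum (f := i) (fun k _ => Nat.zero_le _) (mem_univ k)
    omega

lemma sum_adT_succ (c l : ℕ) (G : (Fin c → ℕ) → ℝ) :
    ∑ i ∈ Finset.Nat.antidiagonalTuple (c + 1) l, G (fun k => i k.castSucc)
      = ∑ t ∈ range (l + 1), ∑ j ∈ Finset.Nat.antidiagonalTuple c t, G j := by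
  rw [Finset.sum_sigma']
  refine Finset.sum_nbij' (i := fun i => ⟨l - i (Fin.last c), fun k => i k.castSucc⟩)
    (j := fun x => Fin.snoc x.2 (l - x.1)) ?_ ?_ ?_ ?_ ?_
  · intro i hi
    rw [Finset.Nat.mem_antidiagonalTuple] at hi
    rw [Fin.sum_univ_castSucc] at hi
    simp only [Finset.mem_sigma, mem_range, Finset.Nat.mem_antidiagonalTuple]
    omega
  · intro x hx
    simp only [Finset.mem_sigma, mem_range, Finset.Nat.mem_antidiagonalTuple] at hx
    rw [Finset.Nat.mem_antidiagonalTuple, Fin.sum_univ_castSucc]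
    simp only [Fin.snoc_castSucc, Fin.snoc_last]
    omega
  · intro i hi
    rw [Finset.Nat.mem_antidiagonalTuple, Fin.sum_univ_castSucc] at hi
    have hle : i (Fin.last c) ≤ l := by omega
    have heq : l - (l - i (Fin.last c)) = i (Fin.last c) := by omega
    show Fin.snoc (fun k => i k.castSucc) (l - (l - i (Fin.last c))) = i
    rw [heq]
    funext k
    refine Fin.lastCases ?_ ?_ k
    · simp
    · intro k'; simp
  · intro x hx
    simp only [Finset.mem_sigma, mem_range, Finset.Nat.mem_antidiagonalTuple] at hx
    have : l - (l - x.1) = x.1 := by omega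
    ext1
    · simp [this]
    · simp
  · intro i _; rfl

lemma choose_key (k : ℕ) (a : ℕ → ℝ) :
    ∑ i ∈ range (k + 2), (Nat.choose (k + 1) i : ℝ) * a i
      = ∑ i ∈ range (k + 1), (Nat.choose k i : ℝ) * a i
        + ∑ i ∈ range (k + 1), (Nat.choose k i : ℝ) * a (i + 1) := by
  rw [Finset.sum_range_succ' (f := fun i => (Nat.choose (k+1) i : ℝ) * a i)]
  simp only [Nat.choose_succ_succ, Nat.cast_add, add_mul, Finset.sum_add_distrib,
    Nat.choose_zero_right, Nat.cast_one, one_mul, Nat.succ_eq_add_one]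
  rw [Finset.sum_range_succ (f := fun x => (Nat.choose k (x+1) : ℝ) * a (x+1)),
      Finset.sum_range_succ' (f := fun i => (Nat.choose k i : ℝ) * a i),
      Finset.sum_range_succ (f := fun i => (Nat.choose k i : ℝ) * a (i+1))]
  rw [Nat.choose_eq_zero_of_lt (Nat.lt_succ_self k)]
  push_cast
  simp only [Nat.choose_self, Nat.cast_one, one_mul, Nat.choose_zero_right, zero_mul]
  ring

lemma diffG (p : ℕ) (s : ℕ → ℝ) (k n : ℕ) :
    fdiff^[k] (fun l => ((1:ℝ)/2) ^ (p * l) * s l) n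
      = ((1:ℝ)/2) ^ (p * (n + k)) *
          ∑ i ∈ range (k + 1), (Nat.choose k i : ℝ) * (-(2:ℝ)^p)^i * s (n + k - i) := by
  induction k generalizing n with
  | zero => simp
  | succ k ih =>
    have hstep : fdiff^[k+1] (fun l => ((1:ℝ)/2) ^ (p * l) * s l) n
        = fdiff^[k] (fun l => ((1:ℝ)/2) ^ (p * l) * s l) (n+1)
          - fdiff^[k] (fun l => ((1:ℝ)/2) ^ (p * l) * s l) n := by
      rw [Function.iterate_succ_apply']; rfl
    rw [hstep, ih, ih]
    have hX : ((1:ℝ)/2) ^ (p * (n + k)) = ((1:ℝ)/2) ^ (p * (n + (k+1))) * (2:ℝ)^p := by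
      have h : p * (n + (k+1)) = p * (n+k) + p := by ring
      rw [h, pow_add, mul_assoc, ← mul_pow]
      norm_num
    have hX2 : p * (n + 1 + k) = p * (n + (k+1)) := by ring
    rw [hX, hX2]
    have hsum : ∑ i ∈ range (k+1+1), (Nat.choose (k+1) i : ℝ) * (-(2:ℝ)^p)^i * s (n + (k+1) - i)
        = ∑ i ∈ range (k+1), (Nat.choose k i : ℝ) * ((-(2:ℝ)^p)^i * s (n + 1 + k - i))
          + ∑ i ∈ range (k+1), (Nat.choose k i : ℝ) * ((-(2:ℝ)^p)^(i+1) * s (n + k - i)) := by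
      have hL : ∑ i ∈ range (k+1+1), (Nat.choose (k+1) i : ℝ) * (-(2:ℝ)^p)^i * s (n + (k+1) - i)
          = ∑ i ∈ range (k+2), (Nat.choose (k+1) i : ℝ)
              * ((fun i => (-(2:ℝ)^p)^i * s (n + (k+1) - i)) i) :=
        Finset.sum_congr rfl fun i _ => by ring
      rw [hL, choose_key k (fun i => (-(2:ℝ)^p)^i * s (n + (k+1) - i))]
      congr 1
      · apply Finset.sum_congr rfl; intro i _
        have h : n + (k+1) - i = n + 1 + k - i := by omega
        simp only [h]
      · apply Finset.sum_congr rfl; intro i _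
        have h : n + (k+1) - (i+1) = n + k - i := by omega
        simp only [h]
    rw [hsum]
    have hS2 : ∑ i ∈ range (k+1), (Nat.choose k i : ℝ) * ((-(2:ℝ)^p)^(i+1) * s (n + k - i))
        = (-(2:ℝ)^p) * ∑ i ∈ range (k+1), (Nat.choose k i : ℝ) * (-(2:ℝ)^p)^i * s (n + k - i) := by
      rw [Finset.mul_sum]
      apply Finset.sum_congr rfl; intro i _; rw [pow_succ]; ring
    have hS1 : ∑ i ∈ range (k+1), (Nat.choose k i : ℝ) * ((-(2:ℝ)^p)^i * s (n + 1 + k - i))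
        = ∑ i ∈ range (k+1), (Nat.choose k i : ℝ) * (-(2:ℝ)^p)^i * s (n + 1 + k - i) :=
      Finset.sum_congr rfl fun i _ => by ring
    rw [hS2, hS1]
    ring

lemma step (m p c : ℕ) (v : (Fin m → ℝ) → ℝ) (h : m ≤ c) (l : ℕ) :
    ∑ i ∈ Finset.Nat.antidiagonalTuple (c + 1) l,
      v (fun j => ((1:ℝ)/2) ^ i (Fin.castLE (h.trans (Nat.le_succ c)) j))
        * ((1:ℝ)/2) ^ (p * ∑ j, i (Fin.castLE (h.trans (Nat.le_succ c)) j))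
    = ∑ t ∈ range (l + 1), ∑ i ∈ Finset.Nat.antidiagonalTuple c t,
        v (fun j => ((1:ℝ)/2) ^ i (Fin.castLE h j))
          * ((1:ℝ)/2) ^ (p * ∑ j, i (Fin.castLE h j)) := by
  rw [← sum_adT_succ c l (fun i => v (fun j => ((1:ℝ)/2) ^ i (Fin.castLE h j))
    * ((1:ℝ)/2) ^ (p * ∑ j, i (Fin.castLE h j)))]
  rfl

lemma chain (m p e : ℕ) (v : (Fin m → ℝ) → ℝ) :
    fdiff^[e] (fun l => ∑ i ∈ Finset.Nat.antidiagonalTuple (m + e) l,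
        v (fun j => ((1:ℝ)/2) ^ i (Fin.castLE (Nat.le_add_right m e) j))
          * ((1:ℝ)/2) ^ (p * ∑ j, i (Fin.castLE (Nat.le_add_right m e) j)))
      = fun n => ((1:ℝ)/2) ^ (p * (n + e)) *
          ∑ jj ∈ Finset.Nat.antidiagonalTuple m (n + e), v (fun t => ((1:ℝ)/2) ^ jj t) := by
  induction e with
  | zero =>
    funext l
    simp only [Function.iterate_zero, id_eq, Nat.add_zero]
    rw [Finset.mul_sum]
    apply Finset.sum_congr rfl
    intro i hi
    rw [Finset.Nat.mem_antidiagonalTuple] at hi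
    have h2 : (∑ j : Fin m, i (Fin.castLE (Nat.le_add_right m 0) j)) = l := hi
    rw [h2, mul_comm]
    rfl
  | succ e ih =>
    have hF : (fun l => ∑ i ∈ Finset.Nat.antidiagonalTuple (m + (e+1)) l,
          v (fun j => ((1:ℝ)/2) ^ i (Fin.castLE (Nat.le_add_right m (e+1)) j))
            * ((1:ℝ)/2) ^ (p * ∑ j, i (Fin.castLE (Nat.le_add_right m (e+1)) j)))
        = fun l => ∑ t ∈ range (l + 1), ∑ i ∈ Finset.Nat.antidiagonalTuple (m + e) t,
            v (fun j => ((1:ℝ)/2) ^ i (Fin.castLE (Nat.le_add_right m e) j))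
              * ((1:ℝ)/2) ^ (p * ∑ j, i (Fin.castLE (Nat.le_add_right m e) j)) := by
      funext l
      exact step m p (m + e) v (Nat.le_add_right m e) l
    rw [hF, Function.iterate_succ_apply, fdiff_partial_sum]
    refine (fdiff_shift e (fun l => ∑ i ∈ Finset.Nat.antidiagonalTuple (m + e) l,
        v (fun j => ((1:ℝ)/2) ^ i (Fin.castLE (Nat.le_add_right m e) j))
          * ((1:ℝ)/2) ^ (p * ∑ j, i (Fin.castLE (Nat.le_add_right m e) j)))).trans ?_
    rw [ih]
    funext n
    have h3 : n + 1 + e = n + (e + 1) := by omega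
    dsimp only
    rw [h3]

/-- Error representation formula (Lemma `err-rep`):
for `F(n) = Σ_{|i|₁ = n, i ∈ ℕ^d} v(2^{-i_1},…,2^{-i_m}) 2^{-p(i_1+⋯+i_m)}` one has
`δ^{d-1}F(n) = 2^{-p(n+d-1)} Σ_{i=0}^{m-1} binom(m-1,i) (-2^p)^i s_{n+d-1-i}` where
`s_l = Σ_{|j|₁ = l, j ∈ ℕ^m} v(2^{-j_1},…,2^{-j_m})`. -/
theorem error_representation_formula (d m p : ℕ) (hd : 1 ≤ d) (hm1 : 1 ≤ m)
    (hmd : m ≤ d) (hp : 1 ≤ p) (v : (Fin m → ℝ) → ℝ) (n : ℕ) :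
    fdiff^[d - 1] (fun l =>
        ∑ i ∈ (Fintype.piFinset fun _ : Fin d => Finset.range (l + 1)).filter
            (fun i => ∑ k, i k = l),
          v (fun j : Fin m => ((1 : ℝ) / 2) ^ i (Fin.castLE hmd j)) *
            ((1 : ℝ) / 2) ^ (p * ∑ j : Fin m, i (Fin.castLE hmd j))) n
      = ((1 : ℝ) / 2) ^ (p * (n + d - 1)) *
          ∑ i ∈ Finset.range m, (Nat.choose (m - 1) i : ℝ) * (-(2 : ℝ) ^ p) ^ i *
            ∑ jj ∈ (Fintype.piFinset fun _ : Fin m => Finset.range (n + d - 1 - i + 1)).filter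
                (fun jj => ∑ k, jj k = n + d - 1 - i),
              v (fun t : Fin m => ((1 : ℝ) / 2) ^ jj t) := by

  obtain ⟨e, rfl⟩ : ∃ e, d = m + e := ⟨d - m, by omega⟩
  obtain ⟨k, rfl⟩ : ∃ k, m = k + 1 := ⟨m - 1, by omega⟩
  have h1 : (fun l =>
        ∑ i ∈ (Fintype.piFinset fun _ : Fin (k + 1 + e) => Finset.range (l + 1)).filter
            (fun i => ∑ kk, i kk = l),
          v (fun j : Fin (k+1) => ((1 : ℝ) / 2) ^ i (Fin.castLE hmd j)) *
            ((1 : ℝ) / 2) ^ (p * ∑ j : Fin (k+1), i (Fin.castLE hmd j)))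
      = (fun l => ∑ i ∈ Finset.Nat.antidiagonalTuple (k + 1 + e) l,
          v (fun j => ((1:ℝ)/2) ^ i (Fin.castLE (Nat.le_add_right (k+1) e) j))
            * ((1:ℝ)/2) ^ (p * ∑ j, i (Fin.castLE (Nat.le_add_right (k+1) e) j))) := by
    funext l
    rw [filter_pi_eq]
  rw [h1]
  have hd1 : k + 1 + e - 1 = k + e := by omega
  rw [hd1, Function.iterate_add_apply, chain (k+1) p e v]
  have h5 : fdiff^[k] (fun n => ((1:ℝ)/2) ^ (p * (n + e)) *
        ∑ jj ∈ Finset.Nat.antidiagonalTuple (k+1) (n + e), v (fun t => ((1:ℝ)/2) ^ jj t)) n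
      = fdiff^[k] (fun l => ((1:ℝ)/2) ^ (p * l) *
        ∑ jj ∈ Finset.Nat.antidiagonalTuple (k+1) l, v (fun t => ((1:ℝ)/2) ^ jj t)) (n + e) :=
    congrFun (fdiff_shift' k e (fun l => ((1:ℝ)/2) ^ (p * l) *
        ∑ jj ∈ Finset.Nat.antidiagonalTuple (k+1) l, v (fun t => ((1:ℝ)/2) ^ jj t))) n
  rw [h5, diffG]
  have e1 : n + (k + 1 + e) - 1 = n + e + k := by omega
  rw [e1, Nat.add_sub_cancel]
  congr 1
  apply Finset.sum_congr rfl
  intro i hi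
  congr 1
  rw [filter_pi_eq]
end
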